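/- arXiv:1510.04524 — 15 statements merged into one kernel-verified Lean document; each statement's English description precedes it below -/
import Mathlib

section
/- Let α, λ, c₁, p'₁, p''₁, q₀, q₁ be real numbers with α ≥ 0, λ ≥ 0, c₁ > λ/(1 + α·λ), q₀ ≥ 0, q₁ ≥ 0 and q₀ + α·q₁ > 0. If q₁ = min(p''₁, max(c₁·(q₀ + α·q₁), p'₁)) and q₁ ≤ λ·q₀, then q₁ = p''₁. (Pointwise Case 1 claim in the proof of Theorem 4 for the least favorable density under the alternative on the acceptance region.) -/
/-- Pointwise Case 1 claim in the proof of Theorem 4 for the least favorable density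
under the alternative on the acceptance region. -/
theorem band_case1_alt (α lam c₁ p'₁ p''₁ q₀ q₁ : ℝ)
    (hα : 0 ≤ α) (hlam : 0 ≤ lam)
    (hc₁ : c₁ > lam / (1 + α * lam)) (hq₀ : 0 ≤ q₀) (hq₁ : 0 ≤ q₁)
    (hpos : 0 < q₀ + α * q₁)
    (hfix : q₁ = min p''₁ (max (c₁ * (q₀ + α * q₁)) p'₁))
    (hle : q₁ ≤ lam * q₀) :
    q₁ = p''₁ := by
  rcases le_total p''₁ (max (c₁ * (q₀ + α * q₁)) p'₁) with h | h
  · rw [min_eq_left h] at hfix; exact hfix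
  · rw [min_eq_right h] at hfix
    exfalso
    have h1 : c₁ * (q₀ + α * q₁) ≤ q₁ := le_trans (le_max_left _ _) hfix.ge
    have hd : (0:ℝ) < 1 + α * lam := by positivity
    rw [gt_iff_lt, div_lt_iff₀ hd] at hc₁
    nlinarith [mul_pos hpos (sub_pos.mpr hc₁), mul_nonneg (mul_nonneg hα hlam) hq₁]
end

section
/- Let α, λ, c₁, p'₁, p''₁, q₀, q₁ be real numbers with α ≥ 0, λ ≥ 0, 0 ≤ c₁ ≤ λ/(1 + α·λ), 0 ≤ p'₁ ≤ p''₁, q₀ ≥ 0 and q₁ ≥ 0. If q₁ = min(p''₁, max(c₁·(q₀ + α·q₁), p'₁)) and q₁ > λ·q₀, then q₁ = p'₁. (Pointwise Case 2 claim in the proof of Theorem 4: on the rejection region the least favorable alternative density equals its lower band boundary.) -/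
/-- Pointwise Case 2 claim in the proof of Theorem 4: on the rejection region the
least favorable alternative density equals its lower band boundary. -/
theorem band_case2_alt (α lam c₁ p'₁ p''₁ q₀ q₁ : ℝ)
    (hα : 0 ≤ α) (hlam : 0 ≤ lam)
    (hc₁ : 0 ≤ c₁) (hc₁' : c₁ ≤ lam / (1 + α * lam))
    (hp'₁ : 0 ≤ p'₁) (hband : p'₁ ≤ p''₁) (hq₀ : 0 ≤ q₀) (hq₁ : 0 ≤ q₁)
    (hfix : q₁ = min p''₁ (max (c₁ * (q₀ + α * q₁)) p'₁))
    (hgt : q₁ > lam * q₀) :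
    q₁ = p'₁ := by
  have hden : (0:ℝ) < 1 + α * lam := by positivity
  have hc'' : c₁ * (1 + α * lam) ≤ lam := by
    rw [← le_div_iff₀ hden]; exact hc₁'
  have ha : c₁ * (q₀ + α * q₁) < q₁ := by
    nlinarith [mul_nonneg hα hq₁, mul_nonneg hc₁ hq₀, mul_nonneg (mul_nonneg hα hlam) hq₁]
  rcases le_or_gt (c₁ * (q₀ + α * q₁)) p'₁ with h | h
  · rw [max_eq_right h, min_eq_right hband] at hfix; exact hfix
  · exfalso
    rw [max_eq_left h.le] at hfix
    have := min_le_right p''₁ (c₁ * (q₀ + α * q₁))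
    linarith [hfix ▸ this]
end

section
/- Let α, λ, c₀, c₁, p'₀, p''₀, p'₁, p''₁, q₀, q₁ be real numbers with α ≥ 0, λ ≥ 0, α + λ > 0, c₀ ≥ 1/(α + λ), c₁ > λ/(1 + α·λ), 0 ≤ p'₀ ≤ p''₀, 0 ≤ p'₁ ≤ p''₁, q₀ ≥ 0, q₁ ≥ 0 and q₀ + q₁ > 0. If q₀ = min(p''₀, max(c₀·(α·q₀ + q₁), p'₀)) and q₁ = min(p''₁, max(c₁·(q₀ + α·q₁), p'₁)), then min(q₁, λ·q₀) = min(p''₁, λ·p''₀). (Combined pointwise identity of Case 1 in the proof of Theorem 4: in the clipping regime the least favorable pair attains the upper band boundaries in the objective.) -/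
set_option maxHeartbeats 1600000 in
/-- Combined pointwise identity of Case 1 in the proof of Theorem 4: in the clipping
regime the least favorable pair attains the upper band boundaries in the objective. -/
theorem band_case1_combined (α lam c₀ c₁ p'₀ p''₀ p'₁ p''₁ q₀ q₁ : ℝ)
    (hα : 0 ≤ α) (hlam : 0 ≤ lam) (hαlam : 0 < α + lam)
    (hc₀ : c₀ ≥ 1 / (α + lam)) (hc₁ : c₁ > lam / (1 + α * lam))
    (hp'₀ : 0 ≤ p'₀) (hband₀ : p'₀ ≤ p''₀)
    (hp'₁ : 0 ≤ p'₁) (hband₁ : p'₁ ≤ p''₁)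
    (hq₀ : 0 ≤ q₀) (hq₁ : 0 ≤ q₁) (hpos : 0 < q₀ + q₁)
    (hfix₀ : q₀ = min p''₀ (max (c₀ * (α * q₀ + q₁)) p'₀))
    (hfix₁ : q₁ = min p''₁ (max (c₁ * (q₀ + α * q₁)) p'₁)) :
    min q₁ (lam * q₀) = min p''₁ (lam * p''₀) := by
  have hq₀le : q₀ ≤ p''₀ := hfix₀ ▸ min_le_left _ _
  have hq₁le : q₁ ≤ p''₁ := hfix₁ ▸ min_le_left _ _
  have hp''₀ : 0 ≤ p''₀ := hp'₀.trans hband₀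
  have hp''₁ : 0 ≤ p''₁ := hp'₁.trans hband₁
  have h1αl : 0 < 1 + α * lam := by nlinarith
  have hs₁ : 0 ≤ q₀ + α * q₁ := by nlinarith
  have hlam' : lam < c₁ * (1 + α * lam) := by
    have := (div_lt_iff₀ h1αl).mp hc₁; linarith
  by_cases h0 : q₀ = p''₀
  · by_cases h1 : q₁ = p''₁
    · rw [h0, h1]
    · have hlt1 : q₁ < p''₁ := lt_of_le_of_ne hq₁le h1
      have hM1 : q₁ = max (c₁ * (q₀ + α * q₁)) p'₁ := by
        rcases min_cases p''₁ (max (c₁ * (q₀ + α * q₁)) p'₁) with ⟨h, _⟩ | ⟨h, _⟩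
        · exact absurd (hfix₁.trans h) h1
        · exact hfix₁.trans h
      have hge1 : c₁ * (q₀ + α * q₁) ≤ q₁ := le_of_le_of_eq (le_max_left _ _) hM1.symm
      rcases hs₁.lt_or_eq with hs | hs
      · -- q₁ > lam * q₀
        have hkey : lam * q₀ < q₁ := by
          nlinarith [mul_le_mul_of_nonneg_left hge1 h1αl.le,
            mul_pos (sub_pos.mpr hlam') hs]
        rw [min_eq_right hkey.le, ← h0, min_eq_right (by linarith)]
      · -- q₀ + α q₁ = 0, so q₀ = 0 = p''₀
        have hq0z : q₀ = 0 := by nlinarith [mul_nonneg hα hq₁]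
        have hp0 : p''₀ = 0 := by rw [← h0]; exact hq0z
        rw [hq0z, hp0, mul_zero, min_eq_right hq₁, min_eq_right hp''₁]
  · have hlt0 : q₀ < p''₀ := lt_of_le_of_ne hq₀le h0
    have hM0 : q₀ = max (c₀ * (α * q₀ + q₁)) p'₀ := by
      rcases min_cases p''₀ (max (c₀ * (α * q₀ + q₁)) p'₀) with ⟨h, _⟩ | ⟨h, _⟩
      · exact absurd (hfix₀.trans h) h0
      · exact hfix₀.trans h
    have hge0 : c₀ * (α * q₀ + q₁) ≤ q₀ := le_of_le_of_eq (le_max_left _ _) hM0.symm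
    have hs₀ : 0 ≤ α * q₀ + q₁ := by nlinarith
    have hc₀' : 1 ≤ c₀ * (α + lam) := by
      have := (div_le_iff₀ hαlam).mp hc₀; linarith
    have hkey : q₁ ≤ lam * q₀ := by
      nlinarith [mul_le_mul_of_nonneg_left hge0 hαlam.le,
        mul_le_mul_of_nonneg_left hc₀' hs₀]
    by_cases h1 : q₁ = p''₁
    · have : p''₁ ≤ lam * p''₀ := by
        nlinarith [mul_le_mul_of_nonneg_left hq₀le hlam]
      rw [min_eq_left hkey, h1, min_eq_left this]
    · -- contradiction
      exfalso
      have hlt1 : q₁ < p''₁ := lt_of_le_of_ne hq₁le h1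
      have hM1 : q₁ = max (c₁ * (q₀ + α * q₁)) p'₁ := by
        rcases min_cases p''₁ (max (c₁ * (q₀ + α * q₁)) p'₁) with ⟨h, _⟩ | ⟨h, _⟩
        · exact absurd (hfix₁.trans h) h1
        · exact hfix₁.trans h
      have hge1 : c₁ * (q₀ + α * q₁) ≤ q₁ := le_of_le_of_eq (le_max_left _ _) hM1.symm
      rcases hs₁.lt_or_eq with hs | hs
      · have hA := mul_le_mul_of_nonneg_left hge1 h1αl.le
        have h2 : lam * (q₀ + α * q₁) < c₁ * (1 + α * lam) * (q₀ + α * q₁) :=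
          mul_lt_mul_of_pos_right hlam' hs
        have h3 : c₁ * (1 + α * lam) * (q₀ + α * q₁)
            = (1 + α * lam) * (c₁ * (q₀ + α * q₁)) := by ring
        rw [h3] at h2
        have h4 : lam * (q₀ + α * q₁) < (1 + α * lam) * q₁ := lt_of_lt_of_le h2 hA
        have h5 : lam * q₀ < q₁ := by nlinarith [h4]
        linarith
      · -- degenerate: q₀ = 0, q₁ > 0, α = 0, lam > 0
        have hq0z : q₀ = 0 := by linarith [mul_nonneg hα hq₁]
        have hq1pos : 0 < q₁ := by linarith
        have hαz : α = 0 := by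
          rcases mul_eq_zero.mp (show α * q₁ = 0 by linarith) with h | h
          · exact h
          · linarith
        have hc₀pos : 0 < c₀ := lt_of_lt_of_le (by positivity) hc₀
        have hMpos : 0 < max (c₀ * (α * q₀ + q₁)) p'₀ :=
          lt_of_lt_of_le (mul_pos hc₀pos (by linarith [mul_nonneg hα hq₀])) (le_max_left _ _)
        have := lt_min (by linarith : (0:ℝ) < p''₀) hMpos
        linarith [hfix₀ ▸ this]
end

section
/- Let (Ω, 𝔉, μ) be a σ-finite measure space, let p'₀, p''₀, p'₁, p''₁ : Ω → ℝ be measurable with 0 ≤ p'ᵢ ≤ p''ᵢ pointwise and p'₀, p'₁ integrable. Let α ≥ 0, λ ≥ 0 with α + λ > 0, and let 0 < c₀ < 1/(α + λ) and 0 < c₁ ≤ λ/(1 + α·λ). Suppose q₀, q₁ are μ-densities satisfying μ-a.e. q₀ = min(p''₀, max(c₀·(α·q₀ + q₁), p'₀)) and q₁ = min(p''₁, max(c₁·(q₀ + α·q₁), p'₁)). Then ∫ min(q₁, λ·q₀) dμ = ∫ min(p'₁, λ·p'₀) dμ + (1 − ∫ p'₁ dμ) + λ·(1 − ∫ p'₀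 dμ). (Case 2 attainment identity in the proof of Theorem 4: the value of the objective at the least favorable pair equals the ε-contamination expression with contamination rates ε᷀ᵢ = 1 − ∫ p'ᵢ dμ.) -/
open MeasureTheory

set_option maxHeartbeats 1600000 in
/-- Pointwise key fact: at a fixed point, `max q₁ (lam*q₀) = max p'₁ (lam*p'₀)`. -/
lemma band_case2_pointwise (p0 P0 p1 P1 a b α lam c₀ c₁ : ℝ)
    (hp0 : 0 ≤ p0) (h0le : p0 ≤ P0) (hp1 : 0 ≤ p1) (h1le : p1 ≤ P1)
    (hα : 0 ≤ α) (hlam : 0 ≤ lam) (hαlam : 0 < α + lam)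
    (hc₀ : 0 < c₀) (hc₀' : c₀ < 1 / (α + lam))
    (hc₁ : 0 < c₁) (hc₁' : c₁ ≤ lam / (1 + α * lam))
    (ha : 0 ≤ a) (hb : 0 ≤ b)
    (heqa : a = min P0 (max (c₀ * (α * a + b)) p0))
    (heqb : b = min P1 (max (c₁ * (a + α * b)) p1)) :
    max b (lam * a) = max p1 (lam * p0) := by
  have h1αlam : (0:ℝ) < 1 + α * lam := by nlinarith
  have key0 : c₀ * (α + lam) < 1 := by
    have := (lt_div_iff₀ hαlam).mp hc₀'
    linarith
  have key1 : c₁ * (1 + α * lam) ≤ lam := by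
    have := (le_div_iff₀ h1αlam).mp hc₁'
    linarith
  have hc₀α : c₀ * α < 1 := by nlinarith
  have hc₁α : c₁ * α < 1 := by nlinarith
  have hap0 : p0 ≤ a := by
    rw [heqa]; exact le_min h0le (le_max_right _ _)
  have hbp1 : p1 ≤ b := by
    rw [heqb]; exact le_min h1le (le_max_right _ _)
  have haX : a ≤ max (c₀ * (α * a + b)) p0 := by
    conv_lhs => rw [heqa]
    exact min_le_right _ _
  have hbX : b ≤ max (c₁ * (a + α * b)) p1 := by
    conv_lhs => rw [heqb]
    exact min_le_right _ _
  have hge : max p1 (lam * p0) ≤ max b (lam * a) :=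
    max_le (le_max_of_le_left hbp1)
      (le_max_of_le_right (by nlinarith))
  have hpos0 : 0 < 1 - c₀ * α := by linarith
  have hpos1 : 0 < 1 - c₁ * α := by linarith
  rcases le_max_iff.mp haX with hA | hA <;> rcases le_max_iff.mp hbX with hB | hB
  · -- a ≤ c₀(αa+b), b ≤ c₁(a+αb): force a = b = 0
    have hbla : b ≤ lam * a := by
      have t1 : (1 - c₁ * α) * b ≤ (1 - c₁ * α) * (lam * a) := by
        nlinarith [mul_le_mul_of_nonneg_right key1 ha]
      exact (mul_le_mul_iff_right₀ hpos1).mp t1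
    have ha0 : a = 0 := by
      refine le_antisymm ?_ ha
      nlinarith [mul_le_mul_of_nonneg_left hbla (le_of_lt hc₀)]
    have hb0 : b = 0 := le_antisymm (by nlinarith) hb
    have hp00 : p0 = 0 := le_antisymm (ha0 ▸ hap0) hp0
    have hp10 : p1 = 0 := le_antisymm (hb0 ▸ hbp1) hp1
    rw [ha0, hb0, hp00, hp10]
  · -- a ≤ c₀(αa+b), b ≤ p1
    have hlab : lam * a ≤ b := by
      have t : (1 - c₀ * α) * (lam * a) ≤ (1 - c₀ * α) * b := by
        nlinarith [mul_le_mul_of_nonneg_left hA hlam, mul_le_mul_of_nonneg_left key0.le hb]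
      exact (mul_le_mul_iff_right₀ hpos0).mp t
    have hb1 : b = p1 := le_antisymm hB hbp1
    refine le_antisymm (max_le ?_ ?_) hge
    · rw [hb1]; exact le_max_left _ _
    · rw [hb1] at hlab; exact le_max_of_le_left hlab
  · -- a ≤ p0, b ≤ c₁(a+αb)
    have ha1 : a = p0 := le_antisymm hA hap0
    have hbla : b ≤ lam * a := by
      have t1 : (1 - c₁ * α) * b ≤ (1 - c₁ * α) * (lam * a) := by
        nlinarith [mul_le_mul_of_nonneg_right key1 ha]
      exact (mul_le_mul_iff_right₀ hpos1).mp t1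
    refine le_antisymm (max_le ?_ ?_) hge
    · rw [ha1] at hbla; exact le_max_of_le_right hbla
    · rw [ha1]; exact le_max_right _ _
  · -- a ≤ p0, b ≤ p1
    have ha1 : a = p0 := le_antisymm hA hap0
    have hb1 : b = p1 := le_antisymm hB hbp1
    rw [ha1, hb1]

/-- Case 2 attainment identity in the proof of Theorem 4: the value of the objective
at the least favorable pair equals the ε-contamination expression with contamination
rates εᵢ = 1 − ∫ p'ᵢ dμ. -/
theorem band_case2_attainment {Ω : Type*} [MeasurableSpace Ω] (μ : Measure Ω) [SigmaFinite μ]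
    (p'₀ p''₀ p'₁ p''₁ : Ω → ℝ)
    (hm'₀ : Measurable p'₀) (hm''₀ : Measurable p''₀)
    (hm'₁ : Measurable p'₁) (hm''₁ : Measurable p''₁)
    (h₀nonneg : ∀ ω, 0 ≤ p'₀ ω) (h₀le : ∀ ω, p'₀ ω ≤ p''₀ ω)
    (h₁nonneg : ∀ ω, 0 ≤ p'₁ ω) (h₁le : ∀ ω, p'₁ ω ≤ p''₁ ω)
    (hint'₀ : Integrable p'₀ μ) (hint'₁ : Integrable p'₁ μ)
    (α lam c₀ c₁ : ℝ)
    (hα : 0 ≤ α) (hlam : 0 ≤ lam) (hαlam : 0 < α + lam)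
    (hc₀ : 0 < c₀) (hc₀' : c₀ < 1 / (α + lam))
    (hc₁ : 0 < c₁) (hc₁' : c₁ ≤ lam / (1 + α * lam))
    (q₀ q₁ : Ω → ℝ)
    (hq₀m : Measurable q₀) (hq₀nonneg : ∀ ω, 0 ≤ q₀ ω)
    (hq₀int : Integrable q₀ μ) (hq₀one : ∫ ω, q₀ ω ∂μ = 1)
    (hq₁m : Measurable q₁) (hq₁nonneg : ∀ ω, 0 ≤ q₁ ω)
    (hq₁int : Integrable q₁ μ) (hq₁one : ∫ ω, q₁ ω ∂μ = 1)
    (hfix₀ : ∀ᵐ ω ∂μ, q₀ ω = min (p''₀ ω) (max (c₀ * (α * q₀ ω + q₁ ω)) (p'₀ ω)))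
    (hfix₁ : ∀ᵐ ω ∂μ, q₁ ω = min (p''₁ ω) (max (c₁ * (q₀ ω + α * q₁ ω)) (p'₁ ω))) :
    ∫ ω, min (q₁ ω) (lam * q₀ ω) ∂μ
      = ∫ ω, min (p'₁ ω) (lam * p'₀ ω) ∂μ
        + (1 - ∫ ω, p'₁ ω ∂μ) + lam * (1 - ∫ ω, p'₀ ω ∂μ) := by
  have hmin : ∀ᵐ ω ∂μ, min (q₁ ω) (lam * q₀ ω)
      = min (p'₁ ω) (lam * p'₀ ω) + (q₁ ω - p'₁ ω) + lam * (q₀ ω - p'₀ ω) := by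
    filter_upwards [hfix₀, hfix₁] with ω h0 h1
    have hmax := band_case2_pointwise (p'₀ ω) (p''₀ ω) (p'₁ ω) (p''₁ ω) (q₀ ω) (q₁ ω)
      α lam c₀ c₁ (h₀nonneg ω) (h₀le ω) (h₁nonneg ω) (h₁le ω) hα hlam hαlam
      hc₀ hc₀' hc₁ hc₁' (hq₀nonneg ω) (hq₁nonneg ω) h0 h1
    have e1 := min_add_max (q₁ ω) (lam * q₀ ω)
    have e2 := min_add_max (p'₁ ω) (lam * p'₀ ω)
    linarith
  have i1 : Integrable (fun ω => min (p'₁ ω) (lam * p'₀ ω)) μ :=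
    hint'₁.inf (hint'₀.const_mul lam)
  have i2 : Integrable (fun ω => q₁ ω - p'₁ ω) μ := hq₁int.sub hint'₁
  have i3 : Integrable (fun ω => lam * (q₀ ω - p'₀ ω)) μ := (hq₀int.sub hint'₀).const_mul lam
  have i12 : Integrable (fun ω => min (p'₁ ω) (lam * p'₀ ω) + (q₁ ω - p'₁ ω)) μ := i1.add i2
  rw [integral_congr_ae hmin, integral_add i12 i3, integral_add i1 i2,
    integral_sub hq₁int hint'₁, integral_const_mul, integral_sub hq₀int hint'₀,
    hq₀one, hq₁one]
end

section
/- (Theorem 5, upper bound.) Let (Ω, 𝔉, μ) be a σ-finite measure space, let p'₀, p''₀, p'₁, p''₁ : Ω → [0, ∞] be measurable with p'ᵢ ≤ p''ᵢ pointwise and p'₀, p'₁ integrable with real values. Let λ ≥ 0 and v₀, v₁ ∈ [0, 1], and set ε᷀ᵢ = 1 − ∫ p'ᵢ dμ and q̂ᵢ = vᵢ·p'ᵢ + (1 − vᵢ)·p''ᵢ for i = 0, 1. Then for all μ-densities p₀ ∈ [p'₀, p''₀] and p₁ ∈ [p'₁, p''₁]: ∫ min(p₀, λ·p₁) dμ ≤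 ∫ min(q̂₀, λ·q̂₁) dμ + v₀·ε᷀₀ + λ·v₁·ε᷀₁, where the integral on the right-hand side is the Lebesgue integral of a nonnegative (possibly non-integrable) function, with values in [0, ∞]. -/
open MeasureTheory ENNReal

/-- Theorem 5 (upper bound): every convex combination of the band boundaries yields an
upper bound on the objective `L_λ` over the density band. -/
theorem band_upper_bound {Ω : Type*} [MeasurableSpace Ω] (μ : Measure Ω) [SigmaFinite μ]
    (p'₀ p''₀ p'₁ p''₁ : Ω → ℝ≥0∞)
    (hm'₀ : Measurable p'₀) (hm''₀ : Measurable p''₀)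
    (hm'₁ : Measurable p'₁) (hm''₁ : Measurable p''₁)
    (h₀le : ∀ ω, p'₀ ω ≤ p''₀ ω) (h₁le : ∀ ω, p'₁ ω ≤ p''₁ ω)
    (hint'₀ : ∫⁻ ω, p'₀ ω ∂μ < ⊤) (hint'₁ : ∫⁻ ω, p'₁ ω ∂μ < ⊤)
    (lam v₀ v₁ : ℝ) (hlam : 0 ≤ lam)
    (hv₀ : v₀ ∈ Set.Icc (0 : ℝ) 1) (hv₁ : v₁ ∈ Set.Icc (0 : ℝ) 1)
    (ε₀ ε₁ : ℝ)
    (hε₀ : ε₀ = 1 - (∫⁻ ω, p'₀ ω ∂μ).toReal)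
    (hε₁ : ε₁ = 1 - (∫⁻ ω, p'₁ ω ∂μ).toReal)
    (qhat₀ qhat₁ : Ω → ℝ≥0∞)
    (hqhat₀ : ∀ ω, qhat₀ ω = ENNReal.ofReal v₀ * p'₀ ω + ENNReal.ofReal (1 - v₀) * p''₀ ω)
    (hqhat₁ : ∀ ω, qhat₁ ω = ENNReal.ofReal v₁ * p'₁ ω + ENNReal.ofReal (1 - v₁) * p''₁ ω)
    (p₀ p₁ : Ω → ℝ)
    (hp₀m : Measurable p₀) (hp₀nonneg : ∀ ω, 0 ≤ p₀ ω)
    (hp₀int : Integrable p₀ μ) (hp₀one : ∫ ω, p₀ ω ∂μ = 1)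
    (hp₀band : ∀ᵐ ω ∂μ, p'₀ ω ≤ ENNReal.ofReal (p₀ ω) ∧ ENNReal.ofReal (p₀ ω) ≤ p''₀ ω)
    (hp₁m : Measurable p₁) (hp₁nonneg : ∀ ω, 0 ≤ p₁ ω)
    (hp₁int : Integrable p₁ μ) (hp₁one : ∫ ω, p₁ ω ∂μ = 1)
    (hp₁band : ∀ᵐ ω ∂μ, p'₁ ω ≤ ENNReal.ofReal (p₁ ω) ∧ ENNReal.ofReal (p₁ ω) ≤ p''₁ ω) :
    ENNReal.ofReal (∫ ω, min (p₀ ω) (lam * p₁ ω) ∂μ)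
      ≤ (∫⁻ ω, min (qhat₀ ω) (ENNReal.ofReal lam * qhat₁ ω) ∂μ)
        + ENNReal.ofReal (v₀ * ε₀) + ENNReal.ofReal (lam * v₁ * ε₁) := by
  obtain ⟨hv₀0, hv₀1⟩ := hv₀
  obtain ⟨hv₁0, hv₁1⟩ := hv₁
  set L := ENNReal.ofReal lam with hL
  set P₀ : Ω → ℝ≥0∞ := fun ω => ENNReal.ofReal (p₀ ω) with hP₀
  set P₁ : Ω → ℝ≥0∞ := fun ω => ENNReal.ofReal (p₁ ω) with hP₁
  have hP₀m : Measurable P₀ := hp₀m.ennreal_ofReal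
  have hP₁m : Measurable P₁ := hp₁m.ennreal_ofReal
  -- integrals of P₀, P₁ equal 1
  have hIP₀ : ∫⁻ ω, P₀ ω ∂μ = 1 := by
    rw [hP₀, ← ofReal_integral_eq_lintegral_ofReal hp₀int
      (Filter.Eventually.of_forall hp₀nonneg), hp₀one, ENNReal.ofReal_one]
  have hIP₁ : ∫⁻ ω, P₁ ω ∂μ = 1 := by
    rw [hP₁, ← ofReal_integral_eq_lintegral_ofReal hp₁int
      (Filter.Eventually.of_forall hp₁nonneg), hp₁one, ENNReal.ofReal_one]
  -- rewrite LHS as a lintegral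
  have hminint : Integrable (fun ω => min (p₀ ω) (lam * p₁ ω)) μ :=
    hp₀int.inf (hp₁int.const_mul lam)
  have hminnn : 0 ≤ᵐ[μ] fun ω => min (p₀ ω) (lam * p₁ ω) :=
    Filter.Eventually.of_forall fun ω => le_min (hp₀nonneg ω) (mul_nonneg hlam (hp₁nonneg ω))
  rw [ofReal_integral_eq_lintegral_ofReal hminint hminnn]
  have hmin_eq : ∀ ω, ENNReal.ofReal (min (p₀ ω) (lam * p₁ ω))
      = min (P₀ ω) (L * P₁ ω) := by
    intro ω
    rw [hL, ← ENNReal.ofReal_mul hlam]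
    have hmono : Monotone ENNReal.ofReal := fun _ _ h => ENNReal.ofReal_le_ofReal h
    exact hmono.map_min
  simp only [hmin_eq]
  -- a.e. pointwise bound
  have key : ∀ᵐ ω ∂μ, min (P₀ ω) (L * P₁ ω)
      ≤ min (qhat₀ ω) (L * qhat₁ ω)
        + ENNReal.ofReal v₀ * (P₀ ω - p'₀ ω)
        + L * ENNReal.ofReal v₁ * (P₁ ω - p'₁ ω) := by
    filter_upwards [hp₀band, hp₁band] with ω ⟨h0l, h0u⟩ ⟨h1l, h1u⟩
    have hb0 : P₀ ω ≤ qhat₀ ω + ENNReal.ofReal v₀ * (P₀ ω - p'₀ ω) := by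
      have : ENNReal.ofReal v₀ * p'₀ ω + ENNReal.ofReal v₀ * (P₀ ω - p'₀ ω)
          = ENNReal.ofReal v₀ * P₀ ω := by
        rw [← mul_add, add_tsub_cancel_of_le h0l]
      calc P₀ ω = (ENNReal.ofReal v₀ + ENNReal.ofReal (1 - v₀)) * P₀ ω := by
            rw [← ENNReal.ofReal_add hv₀0 (by linarith), show v₀ + (1 - v₀) = 1 by ring,
              ENNReal.ofReal_one, one_mul]
        _ = ENNReal.ofReal v₀ * P₀ ω + ENNReal.ofReal (1 - v₀) * P₀ ω := by ring
        _ ≤ ENNReal.ofReal v₀ * P₀ ω + ENNReal.ofReal (1 - v₀) * p''₀ ω := by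
            gcongr
        _ = qhat₀ ω + ENNReal.ofReal v₀ * (P₀ ω - p'₀ ω) := by
            rw [hqhat₀, ← this]; ring
    have hb1 : L * P₁ ω ≤ L * qhat₁ ω + L * ENNReal.ofReal v₁ * (P₁ ω - p'₁ ω) := by
      have h1 : P₁ ω ≤ qhat₁ ω + ENNReal.ofReal v₁ * (P₁ ω - p'₁ ω) := by
        have : ENNReal.ofReal v₁ * p'₁ ω + ENNReal.ofReal v₁ * (P₁ ω - p'₁ ω)
            = ENNReal.ofReal v₁ * P₁ ω := by
          rw [← mul_add, add_tsub_cancel_of_le h1l]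
        calc P₁ ω = (ENNReal.ofReal v₁ + ENNReal.ofReal (1 - v₁)) * P₁ ω := by
              rw [← ENNReal.ofReal_add hv₁0 (by linarith), show v₁ + (1 - v₁) = 1 by ring,
                ENNReal.ofReal_one, one_mul]
          _ = ENNReal.ofReal v₁ * P₁ ω + ENNReal.ofReal (1 - v₁) * P₁ ω := by ring
          _ ≤ ENNReal.ofReal v₁ * P₁ ω + ENNReal.ofReal (1 - v₁) * p''₁ ω := by
              gcongr
          _ = qhat₁ ω + ENNReal.ofReal v₁ * (P₁ ω - p'₁ ω) := by
              rw [hqhat₁, ← this]; ring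
      calc L * P₁ ω ≤ L * (qhat₁ ω + ENNReal.ofReal v₁ * (P₁ ω - p'₁ ω)) := by gcongr
        _ = L * qhat₁ ω + L * ENNReal.ofReal v₁ * (P₁ ω - p'₁ ω) := by ring
    set A := ENNReal.ofReal v₀ * (P₀ ω - p'₀ ω)
    set B := L * ENNReal.ofReal v₁ * (P₁ ω - p'₁ ω)
    calc min (P₀ ω) (L * P₁ ω) ≤ min (qhat₀ ω + A) (L * qhat₁ ω + B) := min_le_min hb0 hb1
      _ ≤ min (qhat₀ ω) (L * qhat₁ ω) + A + B := by
          rcases le_total (qhat₀ ω) (L * qhat₁ ω) with h | h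
          · rw [min_eq_left h]
            exact le_trans (min_le_left _ _) le_self_add
          · rw [min_eq_right h]
            exact le_trans (min_le_right _ _) (add_le_add_left le_self_add B)
  -- measurability facts
  have hq₀m : Measurable qhat₀ := by
    have : qhat₀ = fun ω => ENNReal.ofReal v₀ * p'₀ ω + ENNReal.ofReal (1 - v₀) * p''₀ ω :=
      funext hqhat₀
    rw [this]; exact (hm'₀.const_mul _).add (hm''₀.const_mul _)
  have hq₁m : Measurable qhat₁ := by
    have : qhat₁ = fun ω => ENNReal.ofReal v₁ * p'₁ ω + ENNReal.ofReal (1 - v₁) * p''₁ ω :=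
      funext hqhat₁
    rw [this]; exact (hm'₁.const_mul _).add (hm''₁.const_mul _)
  have hsub₀ : ∫⁻ ω, (P₀ ω - p'₀ ω) ∂μ = 1 - ∫⁻ ω, p'₀ ω ∂μ := by
    rw [lintegral_sub hm'₀ hint'₀.ne
      (hp₀band.mono fun ω h => h.1), hIP₀]
  have hsub₁ : ∫⁻ ω, (P₁ ω - p'₁ ω) ∂μ = 1 - ∫⁻ ω, p'₁ ω ∂μ := by
    rw [lintegral_sub hm'₁ hint'₁.ne
      (hp₁band.mono fun ω h => h.1), hIP₁]
  calc ∫⁻ ω, min (P₀ ω) (L * P₁ ω) ∂μ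
      ≤ ∫⁻ ω, (min (qhat₀ ω) (L * qhat₁ ω)
          + ENNReal.ofReal v₀ * (P₀ ω - p'₀ ω)
          + L * ENNReal.ofReal v₁ * (P₁ ω - p'₁ ω)) ∂μ := lintegral_mono_ae key
    _ = (∫⁻ ω, min (qhat₀ ω) (L * qhat₁ ω) ∂μ)
          + ENNReal.ofReal v₀ * ∫⁻ ω, (P₀ ω - p'₀ ω) ∂μ
          + L * ENNReal.ofReal v₁ * ∫⁻ ω, (P₁ ω - p'₁ ω) ∂μ := by
        rw [lintegral_add_left (show Measurable fun ω => min (qhat₀ ω) (L * qhat₁ ω)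
            + ENNReal.ofReal v₀ * (P₀ ω - p'₀ ω) from (hq₀m.min (hq₁m.const_mul L)).add
          ((hP₀m.sub hm'₀).const_mul _)),
          lintegral_add_left (hq₀m.min (hq₁m.const_mul L)),
          lintegral_const_mul _ (show Measurable fun ω => P₀ ω - p'₀ ω from hP₀m.sub hm'₀),
          lintegral_const_mul _ (show Measurable fun ω => P₁ ω - p'₁ ω from hP₁m.sub hm'₁)]
    _ = (∫⁻ ω, min (qhat₀ ω) (L * qhat₁ ω) ∂μ)
          + ENNReal.ofReal (v₀ * ε₀) + ENNReal.ofReal (lam * v₁ * ε₁) := by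
        rw [hsub₀, hsub₁, hε₀, hε₁]
        congr 2
        · rw [ENNReal.ofReal_mul hv₀0, ENNReal.ofReal_sub _ ENNReal.toReal_nonneg,
            ENNReal.ofReal_one, ENNReal.ofReal_toReal hint'₀.ne]
        · rw [mul_assoc lam v₁, ENNReal.ofReal_mul hlam, ENNReal.ofReal_mul hv₁0,
            ENNReal.ofReal_sub _ ENNReal.toReal_nonneg,
            ENNReal.ofReal_one, ENNReal.ofReal_toReal hint'₁.ne, hL, mul_assoc]
end

section
/- (Theorem 4 combined with Theorem 3: least favorability of the band fixed-point densities.) Let (Ω, 𝔉, μ) be a σ-finite measure space and let p'₀, p''₀, p'₁, p''₁ : Ω → ℝ be measurable with 0 ≤ p'ᵢ ≤ p''ᵢ pointwise and p'₀, p'₁ integrable. Let α ≥ 0 and c₀, c₁ > 0 with α·c₀ ≤ 1 and α·c₁ ≤ 1. Suppose q₀, q₁ are μ-densities satisfying μ-a.e. q₀ = min(p''₀, max(c₀·(α·q₀ + q₁), p'₀)) and q₁ = min(p''₁, max(c₁·(q₀ + α·q₁), p'₁)), and suppose the non-degeneracy condition holds: for μ-a.e. ω, if p''₀(ω) + p''₁(ω)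 > 0 then q₀(ω) + q₁(ω) > 0. Then for every λ ≥ 0 and all μ-densities p₀ ∈ [p'₀, p''₀] and p₁ ∈ [p'₁, p''₁]: ∫ min(p₀, λ·p₁) dμ ≤ ∫ min(q₀, λ·q₁) dμ. -/
set_option maxHeartbeats 1000000

open MeasureTheory

/-- Pointwise facts about a "median"-type fixed point `q = min b (max c a)`. -/
lemma med_facts {a b c q : ℝ} (hab : a ≤ b) (h : q = min b (max c a)) :
    a ≤ q ∧ q ≤ b ∧ (q < b → c ≤ q) ∧ (a < q → q ≤ c) := by
  subst h
  refine ⟨le_min hab (le_max_right _ _), min_le_left _ _, ?_, ?_⟩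
  · intro hlt
    have hmin : min b (max c a) = max c a := by
      rcases min_choice b (max c a) with he | he
      · rw [he] at hlt; exact absurd hlt (lt_irrefl _)
      · exact he
    rw [hmin] at hlt ⊢
    exact le_max_left c a
  · intro ha
    have h1 : a < max c a := lt_of_lt_of_le ha (min_le_right _ _)
    have h2 : max c a = c := by
      rcases max_choice c a with he | he
      · exact he
      · rw [he] at h1; exact absurd h1 (lt_irrefl _)
    calc min b (max c a) ≤ max c a := min_le_right _ _
      _ = c := h2

/-- Theorem 4 combined with Theorem 3: least favorability of the band fixed-point
densities, i.e. they maximize `∫ min(p₀, λ p₁) dμ` over the bands for every `λ ≥ 0`. -/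
theorem band_fixed_point_least_favorable {Ω : Type*} [MeasurableSpace Ω]
    (μ : Measure Ω) [SigmaFinite μ]
    (p'₀ p''₀ p'₁ p''₁ : Ω → ℝ)
    (hm'₀ : Measurable p'₀) (hm''₀ : Measurable p''₀)
    (hm'₁ : Measurable p'₁) (hm''₁ : Measurable p''₁)
    (h₀nonneg : ∀ ω, 0 ≤ p'₀ ω) (h₀le : ∀ ω, p'₀ ω ≤ p''₀ ω)
    (h₁nonneg : ∀ ω, 0 ≤ p'₁ ω) (h₁le : ∀ ω, p'₁ ω ≤ p''₁ ω)
    (hint'₀ : Integrable p'₀ μ) (hint'₁ : Integrable p'₁ μ)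
    (α c₀ c₁ : ℝ) (hα : 0 ≤ α) (hc₀ : 0 < c₀) (hc₁ : 0 < c₁)
    (hαc₀ : α * c₀ ≤ 1) (hαc₁ : α * c₁ ≤ 1)
    (q₀ q₁ : Ω → ℝ)
    (hq₀m : Measurable q₀) (hq₀nonneg : ∀ ω, 0 ≤ q₀ ω)
    (hq₀int : Integrable q₀ μ) (hq₀one : ∫ ω, q₀ ω ∂μ = 1)
    (hq₁m : Measurable q₁) (hq₁nonneg : ∀ ω, 0 ≤ q₁ ω)
    (hq₁int : Integrable q₁ μ) (hq₁one : ∫ ω, q₁ ω ∂μ = 1)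
    (hfix₀ : ∀ᵐ ω ∂μ, q₀ ω = min (p''₀ ω) (max (c₀ * (α * q₀ ω + q₁ ω)) (p'₀ ω)))
    (hfix₁ : ∀ᵐ ω ∂μ, q₁ ω = min (p''₁ ω) (max (c₁ * (q₀ ω + α * q₁ ω)) (p'₁ ω)))
    (hnondeg : ∀ᵐ ω ∂μ, 0 < p''₀ ω + p''₁ ω → 0 < q₀ ω + q₁ ω)
    (lam : ℝ) (hlam : 0 ≤ lam)
    (p₀ p₁ : Ω → ℝ)
    (hp₀m : Measurable p₀) (hp₀nonneg : ∀ ω, 0 ≤ p₀ ω)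
    (hp₀int : Integrable p₀ μ) (hp₀one : ∫ ω, p₀ ω ∂μ = 1)
    (hp₀band : ∀ᵐ ω ∂μ, p'₀ ω ≤ p₀ ω ∧ p₀ ω ≤ p''₀ ω)
    (hp₁m : Measurable p₁) (hp₁nonneg : ∀ ω, 0 ≤ p₁ ω)
    (hp₁int : Integrable p₁ μ) (hp₁one : ∫ ω, p₁ ω ∂μ = 1)
    (hp₁band : ∀ᵐ ω ∂μ, p'₁ ω ≤ p₁ ω ∧ p₁ ω ≤ p''₁ ω) :
    ∫ ω, min (p₀ ω) (lam * p₁ ω) ∂μ ≤ ∫ ω, min (q₀ ω) (lam * q₁ ω) ∂μ := by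
  classical
  set β₀ : ℝ := 1 - α * c₀ with hβ₀def
  set β₁ : ℝ := 1 - α * c₁ with hβ₁def
  have hβ₀nn : 0 ≤ β₀ := by simp [hβ₀def]; linarith
  have hβ₁nn : 0 ≤ β₁ := by simp [hβ₁def]; linarith
  set A : Set Ω := {ω | q₀ ω ≤ lam * q₁ ω} with hAdef
  have hAm : MeasurableSet A := measurableSet_le hq₀m (hq₁m.const_mul lam)
  -- structural pointwise facts about q₀, q₁ derived from the fixed-point equations
  have hstruct : ∀ᵐ ω ∂μ,
      (p'₀ ω ≤ q₀ ω ∧ q₀ ω ≤ p''₀ ω) ∧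
      (p'₁ ω ≤ q₁ ω ∧ q₁ ω ≤ p''₁ ω) ∧
      (q₀ ω < p''₀ ω → c₀ * q₁ ω ≤ β₀ * q₀ ω) ∧
      (p'₀ ω < q₀ ω → β₀ * q₀ ω ≤ c₀ * q₁ ω) ∧
      (q₁ ω < p''₁ ω → c₁ * q₀ ω ≤ β₁ * q₁ ω) ∧
      (p'₁ ω < q₁ ω → β₁ * q₁ ω ≤ c₁ * q₀ ω) := by
    filter_upwards [hfix₀, hfix₁] with ω h0 h1
    obtain ⟨h0a, h0b, h0c, h0d⟩ := med_facts (h₀le ω) h0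
    obtain ⟨h1a, h1b, h1c, h1d⟩ := med_facts (h₁le ω) h1
    refine ⟨⟨h0a, h0b⟩, ⟨h1a, h1b⟩, ?_, ?_, ?_, ?_⟩
    · intro h; have h' := h0c h; simp only [hβ₀def]
      have key : (1 - α * c₀) * q₀ ω - c₀ * q₁ ω
          = q₀ ω - c₀ * (α * q₀ ω + q₁ ω) := by ring
      linarith
    · intro h; have h' := h0d h; simp only [hβ₀def]
      have key : (1 - α * c₀) * q₀ ω - c₀ * q₁ ω
          = q₀ ω - c₀ * (α * q₀ ω + q₁ ω) := by ring
      linarith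
    · intro h; have h' := h1c h; simp only [hβ₁def]
      have key : (1 - α * c₁) * q₁ ω - c₁ * q₀ ω
          = q₁ ω - c₁ * (q₀ ω + α * q₁ ω) := by ring
      linarith
    · intro h; have h' := h1d h; simp only [hβ₁def]
      have key : (1 - α * c₁) * q₁ ω - c₁ * q₀ ω
          = q₁ ω - c₁ * (q₀ ω + α * q₁ ω) := by ring
      linarith
  -- key set-integral inequalities
  have S0 : ∫ ω in A, p₀ ω ∂μ ≤ ∫ ω in A, q₀ ω ∂μ := by
    rcases lt_or_ge (β₀ * lam) c₀ with hb | hb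
    · -- on A, q₀ = p''₀ (using nondegeneracy when q₁ = 0), hence p₀ ≤ q₀
      refine setIntegral_mono_ae_restrict hp₀int.integrableOn hq₀int.integrableOn ?_
      filter_upwards [ae_restrict_of_ae hstruct, ae_restrict_of_ae hp₀band,
        ae_restrict_of_ae hnondeg, ae_restrict_mem hAm] with ω hs hb0 hnd hmem
      obtain ⟨⟨h0l, h0u⟩, ⟨h1l, h1u⟩, hP0a, hP0b, hP1a, hP1b⟩ := hs
      have hmem' : q₀ ω ≤ lam * q₁ ω := hmem
      rcases lt_or_ge 0 (q₁ ω) with hq1 | hq1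
      · have h1 : β₀ * q₀ ω < c₀ * q₁ ω := by
          have t1 : β₀ * q₀ ω ≤ β₀ * (lam * q₁ ω) :=
            mul_le_mul_of_nonneg_left hmem' hβ₀nn
          have t2 : (β₀ * lam) * q₁ ω < c₀ * q₁ ω :=
            mul_lt_mul_of_pos_right hb hq1
          nlinarith
        have h2 : ¬ q₀ ω < p''₀ ω := fun hc => absurd (hP0a hc) (by linarith)
        have e : q₀ ω = p''₀ ω := le_antisymm h0u (not_lt.1 h2)
        linarith [hb0.2]
      · have hq10 : q₁ ω = 0 := le_antisymm hq1 (hq₁nonneg ω)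
        have hq00 : q₀ ω = 0 := by
          have : q₀ ω ≤ 0 := by rw [hq10] at hmem'; simpa using hmem'
          exact le_antisymm this (hq₀nonneg ω)
        have hnd' : ¬ 0 < p''₀ ω + p''₁ ω := by
          intro h; have := hnd h; rw [hq00, hq10] at this; simp at this
        have hp'' : p''₀ ω ≤ 0 := by
          have := h₁le ω; have := h₁nonneg ω; push_neg at hnd'; linarith
        linarith [hb0.2]
    · -- on Aᶜ, q₀ = p'₀, hence ∫_{Aᶜ} q₀ ≤ ∫_{Aᶜ} p₀; flip using total mass 1
      have hcomp : ∫ ω in Aᶜ, q₀ ω ∂μ ≤ ∫ ω in Aᶜ, p₀ ω ∂μ := by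
        refine setIntegral_mono_ae_restrict hq₀int.integrableOn hp₀int.integrableOn ?_
        filter_upwards [ae_restrict_of_ae hstruct, ae_restrict_of_ae hp₀band,
          ae_restrict_mem hAm.compl] with ω hs hb0 hmem
        obtain ⟨⟨h0l, h0u⟩, ⟨h1l, h1u⟩, hP0a, hP0b, hP1a, hP1b⟩ := hs
        have hmem' : lam * q₁ ω < q₀ ω := by
          have : ¬ q₀ ω ≤ lam * q₁ ω := hmem
          linarith [not_le.1 this]
        have hβ₀pos : 0 < β₀ := by
          rcases hβ₀nn.lt_or_eq with h | h
          · exact h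
          · exfalso; rw [← h] at hb; simp at hb; linarith
        have h1 : c₀ * q₁ ω < β₀ * q₀ ω := by
          have t1 : c₀ * q₁ ω ≤ (β₀ * lam) * q₁ ω :=
            mul_le_mul_of_nonneg_right hb (hq₁nonneg ω)
          have t2 : β₀ * (lam * q₁ ω) < β₀ * q₀ ω :=
            mul_lt_mul_of_pos_left hmem' hβ₀pos
          nlinarith
        have h2 : q₀ ω ≤ p'₀ ω := by
          by_contra hc
          exact absurd (hP0b (lt_of_not_ge hc)) (by linarith)
        linarith [hb0.1]
      have e1 := integral_add_compl hAm hp₀int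
      have e2 := integral_add_compl hAm hq₀int
      rw [hp₀one] at e1; rw [hq₀one] at e2
      linarith
  have S1 : ∫ ω in Aᶜ, p₁ ω ∂μ ≤ ∫ ω in Aᶜ, q₁ ω ∂μ := by
    rcases lt_or_ge (c₁ * lam) β₁ with ha | ha
    · -- on A, q₁ = p'₁, hence ∫_A q₁ ≤ ∫_A p₁; flip
      have hcomp : ∫ ω in A, q₁ ω ∂μ ≤ ∫ ω in A, p₁ ω ∂μ := by
        refine setIntegral_mono_ae_restrict hq₁int.integrableOn hp₁int.integrableOn ?_
        filter_upwards [ae_restrict_of_ae hstruct, ae_restrict_of_ae hp₁band,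
          ae_restrict_mem hAm] with ω hs hb1 hmem
        obtain ⟨⟨h0l, h0u⟩, ⟨h1l, h1u⟩, hP0a, hP0b, hP1a, hP1b⟩ := hs
        have hmem' : q₀ ω ≤ lam * q₁ ω := hmem
        have h2 : q₁ ω ≤ p'₁ ω := by
          by_contra hc
          have hq1pos : 0 < q₁ ω := lt_of_le_of_lt (h₁nonneg ω) (lt_of_not_ge hc)
          have t0 := hP1b (lt_of_not_ge hc)
          have t1 : c₁ * q₀ ω ≤ c₁ * (lam * q₁ ω) :=
            mul_le_mul_of_nonneg_left hmem' hc₁.le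
          have t2 : (c₁ * lam) * q₁ ω < β₁ * q₁ ω :=
            mul_lt_mul_of_pos_right ha hq1pos
          nlinarith
        linarith [hb1.1]
      have e1 := integral_add_compl hAm hp₁int
      have e2 := integral_add_compl hAm hq₁int
      rw [hp₁one] at e1; rw [hq₁one] at e2
      linarith
    · -- on Aᶜ, q₁ = p''₁, hence p₁ ≤ q₁ directly
      refine setIntegral_mono_ae_restrict hp₁int.integrableOn hq₁int.integrableOn ?_
      filter_upwards [ae_restrict_of_ae hstruct, ae_restrict_of_ae hp₁band,
        ae_restrict_mem hAm.compl] with ω hs hb1 hmem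
      obtain ⟨⟨h0l, h0u⟩, ⟨h1l, h1u⟩, hP0a, hP0b, hP1a, hP1b⟩ := hs
      have hmem' : lam * q₁ ω < q₀ ω := by
        have : ¬ q₀ ω ≤ lam * q₁ ω := hmem
        linarith [not_le.1 this]
      have h2 : ¬ q₁ ω < p''₁ ω := by
        intro hc
        have t0 := hP1a hc
        have t1 : β₁ * q₁ ω ≤ (c₁ * lam) * q₁ ω :=
          mul_le_mul_of_nonneg_right ha (hq₁nonneg ω)
        have t2 : c₁ * (lam * q₁ ω) < c₁ * q₀ ω :=
          mul_lt_mul_of_pos_left hmem' hc₁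
        nlinarith
      have e : q₁ ω = p''₁ ω := le_antisymm h1u (not_lt.1 h2)
      linarith [hb1.2]
  -- integrability of the minima
  have hminp_int : Integrable (fun ω => min (p₀ ω) (lam * p₁ ω)) μ := by
    have := hp₀int.inf (hp₁int.const_mul lam)
    simpa [Pi.inf_def] using this
  have hminq_int : Integrable (fun ω => min (q₀ ω) (lam * q₁ ω)) μ := by
    have := hq₀int.inf (hq₁int.const_mul lam)
    simpa [Pi.inf_def] using this
  -- decompose both integrals over A and Aᶜ
  have eq_q : ∫ ω, min (q₀ ω) (lam * q₁ ω) ∂μ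
      = (∫ ω in A, q₀ ω ∂μ) + lam * ∫ ω in Aᶜ, q₁ ω ∂μ := by
    rw [← integral_add_compl hAm hminq_int]
    have e1 : ∫ ω in A, min (q₀ ω) (lam * q₁ ω) ∂μ = ∫ ω in A, q₀ ω ∂μ :=
      setIntegral_congr_fun hAm fun ω hω => min_eq_left hω
    have e2 : ∫ ω in Aᶜ, min (q₀ ω) (lam * q₁ ω) ∂μ = ∫ ω in Aᶜ, lam * q₁ ω ∂μ :=
      setIntegral_congr_fun hAm.compl fun ω hω =>
        min_eq_right (le_of_lt (lt_of_not_ge hω))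
    rw [e1, e2, integral_const_mul]
  have le_p : ∫ ω, min (p₀ ω) (lam * p₁ ω) ∂μ
      ≤ (∫ ω in A, p₀ ω ∂μ) + lam * ∫ ω in Aᶜ, p₁ ω ∂μ := by
    rw [← integral_add_compl hAm hminp_int]
    have e1 : ∫ ω in A, min (p₀ ω) (lam * p₁ ω) ∂μ ≤ ∫ ω in A, p₀ ω ∂μ :=
      setIntegral_mono hminp_int.integrableOn hp₀int.integrableOn
        fun ω => min_le_left _ _
    have e2 : ∫ ω in Aᶜ, min (p₀ ω) (lam * p₁ ω) ∂μ ≤ ∫ ω in Aᶜ, lam * p₁ ω ∂μ :=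
      setIntegral_mono hminp_int.integrableOn ((hp₁int.const_mul lam).integrableOn)
        fun ω => min_le_right _ _
    rw [integral_const_mul] at e2
    linarith
  have : lam * ∫ ω in Aᶜ, p₁ ω ∂μ ≤ lam * ∫ ω in Aᶜ, q₁ ω ∂μ :=
    mul_le_mul_of_nonneg_left S1 hlam
  linarith [eq_q, le_p, S0]
end

section
/- (Stochastic-dominance property of the band fixed-point density under the null hypothesis.) Let (Ω, 𝔉, μ) be a σ-finite measure space and let p'₀, p''₀ : Ω → ℝ be measurable with 0 ≤ p'₀ ≤ p''₀ pointwise and p'₀ integrable. Let α ≥ 0 and c₀ > 0 with α·c₀ ≤ 1, let q₁ : Ω → ℝ be measurable and nonnegative, and let q₀ be a μ-density satisfying μ-a.e. q₀ = min(p''₀, max(c₀·(α·q₀ + q₁), p'₀)). Then for every η ≥ 0 and every μ-density p₀ ∈ [p'₀, p''₀]: ∫_{{ω : q₁(ω) > η·q₀(ω)}} p₀ dμ ≤ ∫_{{ω : q₁(ω) > η·q₀(ω)}} q₀ dμ. -/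
open MeasureTheory

/-- Stochastic-dominance property of the band fixed-point density under the null
hypothesis: `q₀` maximizes the probability of the rejection region over its band. -/
theorem band_fixed_point_stochastic_dominance_null {Ω : Type*} [MeasurableSpace Ω]
    (μ : Measure Ω) [SigmaFinite μ]
    (p'₀ p''₀ : Ω → ℝ)
    (hm'₀ : Measurable p'₀) (hm''₀ : Measurable p''₀)
    (h₀nonneg : ∀ ω, 0 ≤ p'₀ ω) (h₀le : ∀ ω, p'₀ ω ≤ p''₀ ω)
    (hint'₀ : Integrable p'₀ μ)
    (α c₀ : ℝ) (hα : 0 ≤ α) (hc₀ : 0 < c₀) (hαc₀ : α * c₀ ≤ 1)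
    (q₁ : Ω → ℝ) (hq₁m : Measurable q₁) (hq₁nonneg : ∀ ω, 0 ≤ q₁ ω)
    (q₀ : Ω → ℝ)
    (hq₀m : Measurable q₀) (hq₀nonneg : ∀ ω, 0 ≤ q₀ ω)
    (hq₀int : Integrable q₀ μ) (hq₀one : ∫ ω, q₀ ω ∂μ = 1)
    (hfix₀ : ∀ᵐ ω ∂μ, q₀ ω = min (p''₀ ω) (max (c₀ * (α * q₀ ω + q₁ ω)) (p'₀ ω)))
    (η : ℝ) (hη : 0 ≤ η)
    (p₀ : Ω → ℝ)
    (hp₀m : Measurable p₀) (hp₀nonneg : ∀ ω, 0 ≤ p₀ ω)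
    (hp₀int : Integrable p₀ μ) (hp₀one : ∫ ω, p₀ ω ∂μ = 1)
    (hp₀band : ∀ᵐ ω ∂μ, p'₀ ω ≤ p₀ ω ∧ p₀ ω ≤ p''₀ ω) :
    ∫ ω in {ω | q₁ ω > η * q₀ ω}, p₀ ω ∂μ ≤ ∫ ω in {ω | q₁ ω > η * q₀ ω}, q₀ ω ∂μ := by
  set A : Set Ω := {ω | q₁ ω > η * q₀ ω} with hAdef
  have hAm : MeasurableSet A := measurableSet_lt (Measurable.const_mul hq₀m η) hq₁m
  by_cases hcase : 1 ≤ c₀ * (α + η)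
  · refine setIntegral_mono_ae_restrict hp₀int.integrableOn hq₀int.integrableOn ?_
    rw [Filter.EventuallyLE, ae_restrict_iff' hAm]
    filter_upwards [hfix₀, hp₀band] with ω hfix hband hωA
    have hωA' : q₁ ω > η * q₀ ω := hωA
    have hq : q₀ ω = p''₀ ω := by
      by_contra hne
      have hle : q₀ ω ≤ p''₀ ω := hfix.le.trans (min_le_left _ _)
      have hlt : q₀ ω < p''₀ ω := lt_of_le_of_ne hle hne
      have hmax : q₀ ω = max (c₀ * (α * q₀ ω + q₁ ω)) (p'₀ ω) := by
        rcases min_cases (p''₀ ω) (max (c₀ * (α * q₀ ω + q₁ ω)) (p'₀ ω)) with ⟨h1, h2⟩ | ⟨h1, h2⟩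
        · exact absurd (hfix.trans h1) hne
        · exact hfix.trans h1
      have hge : c₀ * (α * q₀ ω + q₁ ω) ≤ q₀ ω :=
        (le_max_left _ _).trans hmax.ge
      nlinarith [hq₀nonneg ω, mul_le_mul_of_nonneg_right hcase (hq₀nonneg ω),
        mul_lt_mul_of_pos_left hωA' hc₀]
    rw [hq]; exact hband.2
  · push_neg at hcase
    have key : ∀ᵐ ω ∂μ, ω ∈ Aᶜ → q₀ ω ≤ p₀ ω := by
      filter_upwards [hfix₀, hp₀band] with ω hfix hband hωA
      have hωA' : q₁ ω ≤ η * q₀ ω := not_lt.mp hωA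
      have hle : q₀ ω ≤ max (c₀ * (α * q₀ ω + q₁ ω)) (p'₀ ω) :=
        hfix.le.trans (min_le_right _ _)
      rcases le_max_iff.mp hle with h | h
      · have : q₀ ω ≤ 0 := by
          nlinarith [hq₀nonneg ω, mul_le_mul_of_nonneg_right hcase.le (hq₀nonneg ω),
            mul_le_mul_of_nonneg_left hωA' hc₀.le]
        linarith [hp₀nonneg ω]
      · exact h.trans hband.1
    have hc : ∫ ω in Aᶜ, q₀ ω ∂μ ≤ ∫ ω in Aᶜ, p₀ ω ∂μ := by
      refine setIntegral_mono_ae_restrict hq₀int.integrableOn hp₀int.integrableOn ?_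
      rw [Filter.EventuallyLE, ae_restrict_iff' hAm.compl]
      exact key
    have h1 : ∫ ω in A, q₀ ω ∂μ + ∫ ω in Aᶜ, q₀ ω ∂μ = 1 := by
      rw [integral_add_compl hAm hq₀int, hq₀one]
    have h2 : ∫ ω in A, p₀ ω ∂μ + ∫ ω in Aᶜ, p₀ ω ∂μ = 1 := by
      rw [integral_add_compl hAm hp₀int, hp₀one]
    linarith
end

section
/- (Stochastic-dominance property of the band fixed-point density under the alternative.) Let (Ω, 𝔉, μ) be a σ-finite measure space and let p'₁, p''₁ : Ω → ℝ be measurable with 0 ≤ p'₁ ≤ p''₁ pointwise and p'₁ integrable. Let α ≥ 0 and c₁ > 0 with α·c₁ ≤ 1, let q₀ : Ω → ℝ be measurable and nonnegative, and let q₁ be a μ-density satisfying μ-a.e. q₁ = min(p''₁, max(c₁·(q₀ + α·q₁), p'₁)). Then for every η ≥ 0 and every μ-density p₁ ∈ [p'₁, p''₁]: ∫_A p₁ dμ ≤ ∫_A q₁ dμ, where A = {ω : q₁(ω) ≤ η·q₀(ω) and q₀(ω) > 0}. -/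
open MeasureTheory

/-- Stochastic-dominance property of the band fixed-point density under the
alternative: `q₁` maximizes the probability of the acceptance region over its band. -/
theorem band_fixed_point_stochastic_dominance_alt {Ω : Type*} [MeasurableSpace Ω]
    (μ : Measure Ω) [SigmaFinite μ]
    (p'₁ p''₁ : Ω → ℝ)
    (hm'₁ : Measurable p'₁) (hm''₁ : Measurable p''₁)
    (h₁nonneg : ∀ ω, 0 ≤ p'₁ ω) (h₁le : ∀ ω, p'₁ ω ≤ p''₁ ω)
    (hint'₁ : Integrable p'₁ μ)
    (α c₁ : ℝ) (hα : 0 ≤ α) (hc₁ : 0 < c₁) (hαc₁ : α * c₁ ≤ 1)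
    (q₀ : Ω → ℝ) (hq₀m : Measurable q₀) (hq₀nonneg : ∀ ω, 0 ≤ q₀ ω)
    (q₁ : Ω → ℝ)
    (hq₁m : Measurable q₁) (hq₁nonneg : ∀ ω, 0 ≤ q₁ ω)
    (hq₁int : Integrable q₁ μ) (hq₁one : ∫ ω, q₁ ω ∂μ = 1)
    (hfix₁ : ∀ᵐ ω ∂μ, q₁ ω = min (p''₁ ω) (max (c₁ * (q₀ ω + α * q₁ ω)) (p'₁ ω)))
    (η : ℝ) (hη : 0 ≤ η)
    (p₁ : Ω → ℝ)
    (hp₁m : Measurable p₁) (hp₁nonneg : ∀ ω, 0 ≤ p₁ ω)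
    (hp₁int : Integrable p₁ μ) (hp₁one : ∫ ω, p₁ ω ∂μ = 1)
    (hp₁band : ∀ᵐ ω ∂μ, p'₁ ω ≤ p₁ ω ∧ p₁ ω ≤ p''₁ ω) :
    ∫ ω in {ω | q₁ ω ≤ η * q₀ ω ∧ 0 < q₀ ω}, p₁ ω ∂μ
      ≤ ∫ ω in {ω | q₁ ω ≤ η * q₀ ω ∧ 0 < q₀ ω}, q₁ ω ∂μ := by
  classical
  set A : Set Ω := {ω | q₁ ω ≤ η * q₀ ω ∧ 0 < q₀ ω} with hAdef
  have hA : MeasurableSet A :=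
    (measurableSet_le hq₁m (hq₀m.const_mul η)).inter
      (measurableSet_lt measurable_const hq₀m)
  by_cases hcase : α * c₁ < 1 ∧ c₁ / (1 - α * c₁) ≤ η
  · -- complement case: off A we have q₁ ≤ p₁ a.e.
    obtain ⟨h1, h2⟩ := hcase
    have hpos : (0:ℝ) < 1 - α * c₁ := by linarith
    have h2' : c₁ ≤ η * (1 - α * c₁) := by
      rw [div_le_iff₀ hpos] at h2; linarith
    have hkey : ∀ᵐ ω ∂μ, ω ∈ Aᶜ → q₁ ω ≤ p₁ ω := by
      filter_upwards [hfix₁, hp₁band] with ω hfix hband hmem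
      obtain ⟨hb1, hb2⟩ := hband
      by_contra hlt
      push_neg at hlt
      have hq1pos : 0 < q₁ ω := lt_of_le_of_lt (hp₁nonneg ω) hlt
      have h3 : p'₁ ω < q₁ ω := lt_of_le_of_lt hb1 hlt
      have h4 : q₁ ω ≤ max (c₁ * (q₀ ω + α * q₁ ω)) (p'₁ ω) :=
        hfix.le.trans (min_le_right _ _)
      have h5 : q₁ ω ≤ c₁ * (q₀ ω + α * q₁ ω) := by
        rcases max_cases (c₁ * (q₀ ω + α * q₁ ω)) (p'₁ ω) with ⟨he, _⟩ | ⟨he, _⟩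
        · rw [he] at h4; exact h4
        · rw [he] at h4; linarith
      have hq0pos : 0 < q₀ ω := by nlinarith
      have hnA : ¬ (q₁ ω ≤ η * q₀ ω ∧ 0 < q₀ ω) := hmem
      have h6 : η * q₀ ω < q₁ ω := by
        by_contra h; push_neg at h; exact hnA ⟨h, hq0pos⟩
      nlinarith [mul_le_mul_of_nonneg_right h2' (hq₀nonneg ω)]
    have hcomp : ∫ ω in Aᶜ, q₁ ω ∂μ ≤ ∫ ω in Aᶜ, p₁ ω ∂μ := by
      apply setIntegral_mono_ae_restrict hq₁int.integrableOn hp₁int.integrableOn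
      exact (ae_restrict_iff' hA.compl).mpr hkey
    have e1 := integral_add_compl hA hp₁int
    have e2 := integral_add_compl hA hq₁int
    rw [hp₁one] at e1
    rw [hq₁one] at e2
    linarith
  · -- direct case: on A we have p₁ ≤ q₁ a.e.
    push_neg at hcase
    have hkey : ∀ᵐ ω ∂μ, ω ∈ A → p₁ ω ≤ q₁ ω := by
      filter_upwards [hfix₁, hp₁band] with ω hfix hband hmem
      obtain ⟨hb1, hb2⟩ := hband
      obtain ⟨hle, hq0pos⟩ := hmem
      by_contra hlt
      push_neg at hlt
      have h3 : q₁ ω < p''₁ ω := lt_of_lt_of_le hlt hb2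
      have h4 : c₁ * (q₀ ω + α * q₁ ω) ≤ q₁ ω := by
        rcases min_cases (p''₁ ω) (max (c₁ * (q₀ ω + α * q₁ ω)) (p'₁ ω)) with
          ⟨he, _⟩ | ⟨he, _⟩
        · have := hfix.trans he; linarith
        · have := hfix.trans he
          have h5 := le_max_left (c₁ * (q₀ ω + α * q₁ ω)) (p'₁ ω)
          linarith
      rcases lt_or_eq_of_le hαc₁ with hl | hee
      · have ht : η < c₁ / (1 - α * c₁) := hcase hl
        have hpos : (0:ℝ) < 1 - α * c₁ := by linarith
        have ht' : η * (1 - α * c₁) < c₁ := by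
          rw [lt_div_iff₀ hpos] at ht; linarith
        nlinarith [mul_pos hc₁ hq0pos,
          mul_le_mul_of_nonneg_right hle (le_of_lt hpos)]
      · nlinarith [mul_pos hc₁ hq0pos,
          mul_le_mul_of_nonneg_right hee.le (hq₁nonneg ω),
          mul_le_mul_of_nonneg_right hee.ge (hq₁nonneg ω)]
    apply setIntegral_mono_ae_restrict hp₁int.integrableOn hq₁int.integrableOn
    exact (ae_restrict_iff' hA).mpr hkey
end

section
/- (Minimax robustness of the band-model likelihood-ratio test.) Let (Ω, 𝔉, μ) be a σ-finite measure space and let p'₀, p''₀, p'₁, p''₁ : Ω → ℝ be measurable with 0 ≤ p'ᵢ ≤ p''ᵢ pointwise and p'₀, p'₁ integrable. Let α ≥ 0 and c₀, c₁ > 0 with α·c₀ ≤ 1 and α·c₁ ≤ 1, and let q₀, q₁ be μ-densities satisfying μ-a.e. the band fixed-point equations q₀ = min(p''₀, max(c₀·(α·q₀ + q₁), p'₀)) and q₁ = min(p''₁, max(c₁·(q₀ + α·q₁), p'₁)), together with the non-degeneracy condition: for μ-a.e. ω, if p''₀(ω) + p''₁(ω) > 0 then q₀(ω) + q₁(ω)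 > 0. Fix λ > 0 and let δ* be the indicator function of the set {ω : λ·q₁(ω) > q₀(ω)}. Then for all μ-densities p₀ ∈ [p'₀, p''₀] and p₁ ∈ [p'₁, p''₁]: ∫ δ*·p₀ dμ + λ·∫ (1 − δ*)·p₁ dμ ≤ ∫ δ*·q₀ dμ + λ·∫ (1 − δ*)·q₁ dμ, i.e. the weighted sum error probability of the likelihood-ratio test δ* is maximized by (q₀, q₁). -/
open MeasureTheory

set_option maxHeartbeats 1600000 in
/-- Minimax robustness of the band-model likelihood-ratio test: the weighted sum error
probability of the test `δ* = 𝟙{λ q₁ > q₀}` is maximized over the bands by `(q₀, q₁)`. -/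
theorem band_lrt_minimax {Ω : Type*} [MeasurableSpace Ω]
    (μ : Measure Ω) [SigmaFinite μ]
    (p'₀ p''₀ p'₁ p''₁ : Ω → ℝ)
    (hm'₀ : Measurable p'₀) (hm''₀ : Measurable p''₀)
    (hm'₁ : Measurable p'₁) (hm''₁ : Measurable p''₁)
    (h₀nonneg : ∀ ω, 0 ≤ p'₀ ω) (h₀le : ∀ ω, p'₀ ω ≤ p''₀ ω)
    (h₁nonneg : ∀ ω, 0 ≤ p'₁ ω) (h₁le : ∀ ω, p'₁ ω ≤ p''₁ ω)
    (hint'₀ : Integrable p'₀ μ) (hint'₁ : Integrable p'₁ μ)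
    (α c₀ c₁ : ℝ) (hα : 0 ≤ α) (hc₀ : 0 < c₀) (hc₁ : 0 < c₁)
    (hαc₀ : α * c₀ ≤ 1) (hαc₁ : α * c₁ ≤ 1)
    (q₀ q₁ : Ω → ℝ)
    (hq₀m : Measurable q₀) (hq₀nonneg : ∀ ω, 0 ≤ q₀ ω)
    (hq₀int : Integrable q₀ μ) (hq₀one : ∫ ω, q₀ ω ∂μ = 1)
    (hq₁m : Measurable q₁) (hq₁nonneg : ∀ ω, 0 ≤ q₁ ω)
    (hq₁int : Integrable q₁ μ) (hq₁one : ∫ ω, q₁ ω ∂μ = 1)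
    (hfix₀ : ∀ᵐ ω ∂μ, q₀ ω = min (p''₀ ω) (max (c₀ * (α * q₀ ω + q₁ ω)) (p'₀ ω)))
    (hfix₁ : ∀ᵐ ω ∂μ, q₁ ω = min (p''₁ ω) (max (c₁ * (q₀ ω + α * q₁ ω)) (p'₁ ω)))
    (hnondeg : ∀ᵐ ω ∂μ, 0 < p''₀ ω + p''₁ ω → 0 < q₀ ω + q₁ ω)
    (lam : ℝ) (hlam : 0 < lam)
    (δstar : Ω → ℝ)
    (hδstar : δstar = Set.indicator {ω | q₀ ω < lam * q₁ ω} (fun _ => (1 : ℝ)))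
    (p₀ p₁ : Ω → ℝ)
    (hp₀m : Measurable p₀) (hp₀nonneg : ∀ ω, 0 ≤ p₀ ω)
    (hp₀int : Integrable p₀ μ) (hp₀one : ∫ ω, p₀ ω ∂μ = 1)
    (hp₀band : ∀ᵐ ω ∂μ, p'₀ ω ≤ p₀ ω ∧ p₀ ω ≤ p''₀ ω)
    (hp₁m : Measurable p₁) (hp₁nonneg : ∀ ω, 0 ≤ p₁ ω)
    (hp₁int : Integrable p₁ μ) (hp₁one : ∫ ω, p₁ ω ∂μ = 1)
    (hp₁band : ∀ᵐ ω ∂μ, p'₁ ω ≤ p₁ ω ∧ p₁ ω ≤ p''₁ ω) :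
    ∫ ω, δstar ω * p₀ ω ∂μ + lam * ∫ ω, (1 - δstar ω) * p₁ ω ∂μ
      ≤ ∫ ω, δstar ω * q₀ ω ∂μ + lam * ∫ ω, (1 - δstar ω) * q₁ ω ∂μ := by
  classical
  set A : Set Ω := {ω | q₀ ω < lam * q₁ ω} with hAdef
  have hA : MeasurableSet A := measurableSet_lt hq₀m (hq₁m.const_mul lam)
  set a : Ω → ℝ := fun ω => p₀ ω - q₀ ω with hadef
  set b : Ω → ℝ := fun ω => p₁ ω - q₁ ω with hbdef
  have ha_int : Integrable a μ := hp₀int.sub hq₀int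
  have hb_int : Integrable b μ := hp₁int.sub hq₁int
  have ha0 : ∫ ω, a ω ∂μ = 0 := by
    simp only [hadef]
    rw [integral_sub hp₀int hq₀int, hp₀one, hq₀one]; ring
  have hb0 : ∫ ω, b ω ∂μ = 0 := by
    simp only [hbdef]
    rw [integral_sub hp₁int hq₁int, hp₁one, hq₁one]; ring
  -- pointwise complementary-slackness facts from the fixed-point equations
  have main : ∀ᵐ ω ∂μ,
      ((1 - α * c₀) * q₀ ω < c₀ * q₁ ω → p₀ ω ≤ q₀ ω) ∧
      (c₀ * q₁ ω < (1 - α * c₀) * q₀ ω → q₀ ω ≤ p₀ ω) ∧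
      ((1 - α * c₁) * q₁ ω < c₁ * q₀ ω → p₁ ω ≤ q₁ ω) ∧
      (c₁ * q₀ ω < (1 - α * c₁) * q₁ ω → q₁ ω ≤ p₁ ω) ∧
      (q₁ ω = 0 → p₁ ω ≤ 0) ∧
      (q₀ ω = 0 → q₁ ω = 0 → p₀ ω = 0 ∧ p₁ ω = 0) := by
    filter_upwards [hfix₀, hfix₁, hnondeg, hp₀band, hp₁band] with ω e₀ e₁ hnd hband₀ hband₁
    have hzero : q₀ ω = 0 → q₁ ω = 0 → p₀ ω = 0 ∧ p₁ ω = 0 := by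
      intro h0 h1
      have hle : ¬ (0 < p''₀ ω + p''₁ ω) := by
        intro hcon
        have := hnd hcon
        linarith
      have h2 : p''₀ ω ≤ 0 := by
        have := le_trans (h₁nonneg ω) (h₁le ω)
        linarith [not_lt.1 hle]
      have h3 : p''₁ ω ≤ 0 := by
        have := le_trans (h₀nonneg ω) (h₀le ω)
        linarith [not_lt.1 hle]
      exact ⟨le_antisymm (le_trans hband₀.2 h2) (le_trans (h₀nonneg ω) hband₀.1),
             le_antisymm (le_trans hband₁.2 h3) (le_trans (h₁nonneg ω) hband₁.1)⟩
    refine ⟨?_, ?_, ?_, ?_, ?_, hzero⟩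
    · intro h
      have hX : q₀ ω < c₀ * (α * q₀ ω + q₁ ω) := by nlinarith
      have hq : q₀ ω = p''₀ ω := by
        rcases min_choice (p''₀ ω) (max (c₀ * (α * q₀ ω + q₁ ω)) (p'₀ ω)) with hm | hm
        · rw [← e₀] at hm; exact hm
        · exfalso
          rw [← e₀] at hm
          have hle := le_max_left (c₀ * (α * q₀ ω + q₁ ω)) (p'₀ ω)
          rw [← hm] at hle
          linarith
      linarith [hband₀.2]
    · intro h
      have hX : c₀ * (α * q₀ ω + q₁ ω) < q₀ ω := by nlinarith
      have hq : q₀ ω = p'₀ ω := by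
        rcases max_choice (c₀ * (α * q₀ ω + q₁ ω)) (p'₀ ω) with hm | hm
        · exfalso
          have h1 : q₀ ω ≤ max (c₀ * (α * q₀ ω + q₁ ω)) (p'₀ ω) :=
            e₀.trans_le (min_le_right _ _)
          rw [hm] at h1
          linarith
        · rw [e₀, hm]; exact min_eq_right (h₀le ω)
      linarith [hband₀.1]
    · intro h
      have hX : q₁ ω < c₁ * (q₀ ω + α * q₁ ω) := by nlinarith
      have hq : q₁ ω = p''₁ ω := by
        rcases min_choice (p''₁ ω) (max (c₁ * (q₀ ω + α * q₁ ω)) (p'₁ ω)) with hm | hm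
        · rw [← e₁] at hm; exact hm
        · exfalso
          rw [← e₁] at hm
          have hle := le_max_left (c₁ * (q₀ ω + α * q₁ ω)) (p'₁ ω)
          rw [← hm] at hle
          linarith
      linarith [hband₁.2]
    · intro h
      have hX : c₁ * (q₀ ω + α * q₁ ω) < q₁ ω := by nlinarith
      have hq : q₁ ω = p'₁ ω := by
        rcases max_choice (c₁ * (q₀ ω + α * q₁ ω)) (p'₁ ω) with hm | hm
        · exfalso
          have h1 : q₁ ω ≤ max (c₁ * (q₀ ω + α * q₁ ω)) (p'₁ ω) :=
            e₁.trans_le (min_le_right _ _)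
          rw [hm] at h1
          linarith
        · rw [e₁, hm]; exact min_eq_right (h₁le ω)
      linarith [hband₁.1]
    · intro h1
      rcases min_choice (p''₁ ω) (max (c₁ * (q₀ ω + α * q₁ ω)) (p'₁ ω)) with hm | hm
      · rw [← e₁] at hm
        linarith [hband₁.2]
      · rw [← e₁] at hm
        have hXle : c₁ * (q₀ ω + α * q₁ ω) ≤ q₁ ω :=
          le_trans (le_max_left _ _) hm.ge
        have hq0 : q₀ ω = 0 := by
          refine le_antisymm ?_ (hq₀nonneg ω)
          nlinarith [hq₀nonneg ω]
        linarith [(hzero hq0 h1).2]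
  -- the four conditional sign lemmas
  have keyA1 : lam * (1 - α * c₀) ≤ c₀ → ∀ᵐ ω ∂μ, ω ∈ A → p₀ ω ≤ q₀ ω := by
    intro hP
    filter_upwards [main] with ω hm hω
    have hmem : q₀ ω < lam * q₁ ω := by rw [hAdef] at hω; exact hω
    have hq₁pos : 0 < q₁ ω := by nlinarith [hq₀nonneg ω]
    exact hm.1 (by
      nlinarith [mul_nonneg (sub_nonneg.2 hP) (hq₀nonneg ω),
        mul_lt_mul_of_pos_left hmem hc₀, mul_pos hc₀ hq₁pos, hlam])
  have keyA2 : lam * c₁ ≤ 1 - α * c₁ → ∀ᵐ ω ∂μ, ω ∈ A → q₁ ω ≤ p₁ ω := by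
    intro hQ
    filter_upwards [main] with ω hm hω
    have hmem : q₀ ω < lam * q₁ ω := by rw [hAdef] at hω; exact hω
    exact hm.2.2.2.1 (by
      nlinarith [mul_lt_mul_of_pos_left hmem hc₁,
        mul_nonneg (sub_nonneg.2 hQ) (hq₁nonneg ω)])
  have keyB1 : c₀ < lam * (1 - α * c₀) → ∀ᵐ ω ∂μ, ω ∉ A → q₀ ω ≤ p₀ ω := by
    intro hP
    filter_upwards [main] with ω hm hω
    have hmem : lam * q₁ ω ≤ q₀ ω := by rw [hAdef] at hω; exact not_lt.1 hω
    by_cases h0 : q₀ ω = 0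
    · have h1 : q₁ ω = 0 := by
        refine le_antisymm ?_ (hq₁nonneg ω)
        nlinarith [hq₁nonneg ω]
      linarith [(hm.2.2.2.2.2 h0 h1).1]
    · have hq₀pos : 0 < q₀ ω := (hq₀nonneg ω).lt_of_ne (Ne.symm h0)
      exact hm.2.1 (by
        nlinarith [mul_le_mul_of_nonneg_left hmem hc₀.le,
          mul_pos (sub_pos.2 hP) hq₀pos, hlam])
  have keyB2 : 1 - α * c₁ < lam * c₁ → ∀ᵐ ω ∂μ, ω ∉ A → p₁ ω ≤ q₁ ω := by
    intro hQ
    filter_upwards [main] with ω hm hω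
    have hmem : lam * q₁ ω ≤ q₀ ω := by rw [hAdef] at hω; exact not_lt.1 hω
    by_cases h1 : q₁ ω = 0
    · linarith [hm.2.2.2.2.1 h1]
    · have hq₁pos : 0 < q₁ ω := (hq₁nonneg ω).lt_of_ne (Ne.symm h1)
      exact hm.2.2.1 (by
        nlinarith [mul_pos (sub_pos.2 hQ) hq₁pos,
          mul_le_mul_of_nonneg_left hmem hc₁.le])
  -- choose Lagrange multipliers according to the position of lam
  obtain ⟨s, t, hst⟩ : ∃ s t : ℝ, ∀ᵐ ω ∂μ,
      A.indicator a ω + lam * Aᶜ.indicator b ω ≤ s * a ω + t * b ω := by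
    by_cases hP : lam * (1 - α * c₀) ≤ c₀ <;> by_cases hQ : lam * c₁ ≤ 1 - α * c₁
    · refine ⟨0, lam, ?_⟩
      filter_upwards [keyA1 hP, keyA2 hQ] with ω k1 k2
      by_cases hω : ω ∈ A
      · rw [Set.indicator_of_mem hω, Set.indicator_of_notMem (Set.notMem_compl_iff.2 hω)]
        have h1 := k1 hω; have h2 := k2 hω
        simp only [hadef, hbdef]
        nlinarith [mul_nonneg hlam.le (sub_nonneg.2 h2)]
      · rw [Set.indicator_of_notMem hω, Set.indicator_of_mem (Set.mem_compl hω)]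
        simp only [hadef, hbdef]
        linarith
    · refine ⟨0, 0, ?_⟩
      filter_upwards [keyA1 hP, keyB2 (not_le.1 hQ)] with ω k1 k2
      by_cases hω : ω ∈ A
      · rw [Set.indicator_of_mem hω, Set.indicator_of_notMem (Set.notMem_compl_iff.2 hω)]
        have h1 := k1 hω
        simp only [hadef, hbdef]
        linarith
      · rw [Set.indicator_of_notMem hω, Set.indicator_of_mem (Set.mem_compl hω)]
        have h2 := k2 hω
        simp only [hadef, hbdef]
        nlinarith [mul_nonneg hlam.le (sub_nonneg.2 h2)]
    · refine ⟨1, lam, ?_⟩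
      filter_upwards [keyB1 (not_le.1 hP), keyA2 hQ] with ω k1 k2
      by_cases hω : ω ∈ A
      · rw [Set.indicator_of_mem hω, Set.indicator_of_notMem (Set.notMem_compl_iff.2 hω)]
        have h2 := k2 hω
        simp only [hadef, hbdef]
        nlinarith [mul_nonneg hlam.le (sub_nonneg.2 h2)]
      · rw [Set.indicator_of_notMem hω, Set.indicator_of_mem (Set.mem_compl hω)]
        have h1 := k1 hω
        simp only [hadef, hbdef]
        linarith
    · refine ⟨1, 0, ?_⟩
      filter_upwards [keyB1 (not_le.1 hP), keyB2 (not_le.1 hQ)] with ω k1 k2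
      by_cases hω : ω ∈ A
      · rw [Set.indicator_of_mem hω, Set.indicator_of_notMem (Set.notMem_compl_iff.2 hω)]
        simp only [hadef, hbdef]
        linarith
      · rw [Set.indicator_of_notMem hω, Set.indicator_of_mem (Set.mem_compl hω)]
        have h1 := k1 hω; have h2 := k2 hω
        simp only [hadef, hbdef]
        nlinarith [mul_nonneg hlam.le (sub_nonneg.2 h2)]
  -- integrate the pointwise bound
  have hint1 : Integrable (A.indicator a) μ := ha_int.indicator hA
  have hint2 : Integrable (Aᶜ.indicator b) μ := hb_int.indicator hA.compl
  have key : ∫ ω, A.indicator a ω ∂μ + lam * ∫ ω, Aᶜ.indicator b ω ∂μ ≤ 0 := by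
    have hL : Integrable (fun ω => A.indicator a ω + lam * Aᶜ.indicator b ω) μ :=
      hint1.add (hint2.const_mul lam)
    have hR : Integrable (fun ω => s * a ω + t * b ω) μ :=
      (ha_int.const_mul s).add (hb_int.const_mul t)
    have h1 := integral_mono_ae hL hR hst
    rw [integral_add hint1 (hint2.const_mul lam),
        integral_add (ha_int.const_mul s) (hb_int.const_mul t),
        integral_const_mul, integral_const_mul, integral_const_mul, ha0, hb0] at h1
    simpa using h1
  -- rewrite the goal integrals as indicator integrals
  have E0 : ∫ ω, δstar ω * p₀ ω ∂μ = ∫ ω, A.indicator p₀ ω ∂μ := by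
    apply integral_congr_ae
    filter_upwards with ω
    by_cases h : ω ∈ A <;> simp [hδstar, Set.indicator_apply, h]
  have E0q : ∫ ω, δstar ω * q₀ ω ∂μ = ∫ ω, A.indicator q₀ ω ∂μ := by
    apply integral_congr_ae
    filter_upwards with ω
    by_cases h : ω ∈ A <;> simp [hδstar, Set.indicator_apply, h]
  have E1 : ∫ ω, (1 - δstar ω) * p₁ ω ∂μ = ∫ ω, Aᶜ.indicator p₁ ω ∂μ := by
    apply integral_congr_ae
    filter_upwards with ω
    by_cases h : ω ∈ A <;> simp [hδstar, Set.indicator_apply, h]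
  have E1q : ∫ ω, (1 - δstar ω) * q₁ ω ∂μ = ∫ ω, Aᶜ.indicator q₁ ω ∂μ := by
    apply integral_congr_ae
    filter_upwards with ω
    by_cases h : ω ∈ A <;> simp [hδstar, Set.indicator_apply, h]
  have Ea : ∫ ω, A.indicator a ω ∂μ
      = ∫ ω, A.indicator p₀ ω ∂μ - ∫ ω, A.indicator q₀ ω ∂μ := by
    rw [← integral_sub (hp₀int.indicator hA) (hq₀int.indicator hA)]
    apply integral_congr_ae
    filter_upwards with ω
    by_cases h : ω ∈ A <;> simp [Set.indicator_apply, h, hadef]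
  have Eb : ∫ ω, Aᶜ.indicator b ω ∂μ
      = ∫ ω, Aᶜ.indicator p₁ ω ∂μ - ∫ ω, Aᶜ.indicator q₁ ω ∂μ := by
    rw [← integral_sub (hp₁int.indicator hA.compl) (hq₁int.indicator hA.compl)]
    apply integral_congr_ae
    filter_upwards with ω
    by_cases h : ω ∈ Aᶜ <;> simp [Set.indicator_apply, h, hbdef]
  rw [E0, E1, E0q, E1q]
  rw [Ea, Eb] at key
  nlinarith [key]
end

section
/- (Huber's ε-contamination model as a special case of the band model.) Let (Ω, 𝔉, μ) be a σ-finite measure space and let p'₀, p'₁ : Ω → ℝ be nonnegative, measurable and integrable. Let c₀, c₁ > 0 and suppose q₀, q₁ are μ-densities satisfying μ-a.e. q₀ = max(c₀·q₁, p'₀) and q₁ = max(c₁·q₀, p'₁). Then for every λ ≥ 0 and all μ-densities p₀, p₁ with p₀ ≥ p'₀ μ-a.e. and p₁ ≥ p'₁ μ-a.e.: ∫ min(p₀, λ·p₁) dμ ≤ ∫ min(q₀, λ·q₁) dμ. -/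
open MeasureTheory

/-- Huber's ε-contamination model as a special case of the band model: the Huber
fixed-point densities are least favorable for the classes `{p : p ≥ p'ᵢ μ-a.e.}`. -/
theorem huber_special_case {Ω : Type*} [MeasurableSpace Ω]
    (μ : Measure Ω) [SigmaFinite μ]
    (p'₀ p'₁ : Ω → ℝ)
    (hm'₀ : Measurable p'₀) (hm'₁ : Measurable p'₁)
    (h₀nonneg : ∀ ω, 0 ≤ p'₀ ω) (h₁nonneg : ∀ ω, 0 ≤ p'₁ ω)
    (hint'₀ : Integrable p'₀ μ) (hint'₁ : Integrable p'₁ μ)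
    (c₀ c₁ : ℝ) (hc₀ : 0 < c₀) (hc₁ : 0 < c₁)
    (q₀ q₁ : Ω → ℝ)
    (hq₀m : Measurable q₀) (hq₀nonneg : ∀ ω, 0 ≤ q₀ ω)
    (hq₀int : Integrable q₀ μ) (hq₀one : ∫ ω, q₀ ω ∂μ = 1)
    (hq₁m : Measurable q₁) (hq₁nonneg : ∀ ω, 0 ≤ q₁ ω)
    (hq₁int : Integrable q₁ μ) (hq₁one : ∫ ω, q₁ ω ∂μ = 1)
    (hfix₀ : ∀ᵐ ω ∂μ, q₀ ω = max (c₀ * q₁ ω) (p'₀ ω))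
    (hfix₁ : ∀ᵐ ω ∂μ, q₁ ω = max (c₁ * q₀ ω) (p'₁ ω))
    (lam : ℝ) (hlam : 0 ≤ lam)
    (p₀ p₁ : Ω → ℝ)
    (hp₀m : Measurable p₀) (hp₀nonneg : ∀ ω, 0 ≤ p₀ ω)
    (hp₀int : Integrable p₀ μ) (hp₀one : ∫ ω, p₀ ω ∂μ = 1)
    (hp₀band : ∀ᵐ ω ∂μ, p'₀ ω ≤ p₀ ω)
    (hp₁m : Measurable p₁) (hp₁nonneg : ∀ ω, 0 ≤ p₁ ω)
    (hp₁int : Integrable p₁ μ) (hp₁one : ∫ ω, p₁ ω ∂μ = 1)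
    (hp₁band : ∀ᵐ ω ∂μ, p'₁ ω ≤ p₁ ω) :
    ∫ ω, min (p₀ ω) (lam * p₁ ω) ∂μ ≤ ∫ ω, min (q₀ ω) (lam * q₁ ω) ∂μ := by
  classical
  have hlp₁int : Integrable (fun ω => lam * p₁ ω) μ := hp₁int.const_mul lam
  have hlq₁int : Integrable (fun ω => lam * q₁ ω) μ := hq₁int.const_mul lam
  have hminP : Integrable (fun ω => min (p₀ ω) (lam * p₁ ω)) μ := by
    exact hp₀int.inf hlp₁int
  have hminQ : Integrable (fun ω => min (q₀ ω) (lam * q₁ ω)) μ := by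
    exact hq₀int.inf hlq₁int
  by_cases hcase1 : lam ≤ c₀
  · -- Then `min (q₀, lam*q₁) = lam*q₁` a.e.
    have hQ : ∫ ω, min (q₀ ω) (lam * q₁ ω) ∂μ = lam := by
      have h : ∀ᵐ ω ∂μ, min (q₀ ω) (lam * q₁ ω) = lam * q₁ ω := by
        filter_upwards [hfix₀] with ω h
        have h1 : lam * q₁ ω ≤ q₀ ω := by
          have := le_max_left (c₀ * q₁ ω) (p'₀ ω)
          nlinarith [hq₁nonneg ω]
        exact min_eq_right h1
      rw [integral_congr_ae h, integral_const_mul, hq₁one, mul_one]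
    have hP : ∫ ω, min (p₀ ω) (lam * p₁ ω) ∂μ ≤ lam := by
      calc ∫ ω, min (p₀ ω) (lam * p₁ ω) ∂μ ≤ ∫ ω, lam * p₁ ω ∂μ :=
            integral_mono_ae hminP hlp₁int (Filter.Eventually.of_forall fun ω => min_le_right _ _)
        _ = lam := by rw [integral_const_mul, hp₁one, mul_one]
    linarith
  by_cases hcase2 : 1 ≤ lam * c₁
  · -- Then `min (q₀, lam*q₁) = q₀` a.e.
    have hQ : ∫ ω, min (q₀ ω) (lam * q₁ ω) ∂μ = 1 := by
      have h : ∀ᵐ ω ∂μ, min (q₀ ω) (lam * q₁ ω) = q₀ ω := by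
        filter_upwards [hfix₁] with ω h
        have h1 : q₀ ω ≤ lam * q₁ ω := by
          have := le_max_left (c₁ * q₀ ω) (p'₁ ω)
          nlinarith [hq₀nonneg ω]
        exact min_eq_left h1
      rw [integral_congr_ae h, hq₀one]
    have hP : ∫ ω, min (p₀ ω) (lam * p₁ ω) ∂μ ≤ 1 := by
      calc ∫ ω, min (p₀ ω) (lam * p₁ ω) ∂μ ≤ ∫ ω, p₀ ω ∂μ :=
            integral_mono_ae hminP hp₀int (Filter.Eventually.of_forall fun ω => min_le_left _ _)
        _ = 1 := hp₀one
    linarith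
  -- Main case: c₀ < lam and lam * c₁ < 1
  push_neg at hcase1 hcase2
  set A : Set Ω := {ω | q₀ ω ≤ lam * q₁ ω} with hAdef
  have hA : MeasurableSet A := measurableSet_le hq₀m (hq₁m.const_mul lam)
  have hmemA : ∀ ω, ω ∈ A ↔ q₀ ω ≤ lam * q₁ ω := fun ω => Iff.rfl
  -- On Aᶜ, q₀ = p'₀ a.e.
  have ha : ∀ᵐ ω ∂μ, ω ∈ Aᶜ → q₀ ω = p'₀ ω := by
    filter_upwards [hfix₀] with ω h hω
    have hω' : lam * q₁ ω < q₀ ω := not_le.mp hω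
    rcases max_choice (c₀ * q₁ ω) (p'₀ ω) with h' | h'
    · exfalso; rw [h, h'] at hω'; nlinarith [hq₁nonneg ω]
    · rw [h, h']
  -- On A, q₁ = p'₁ a.e.
  have hb : ∀ᵐ ω ∂μ, ω ∈ A → q₁ ω = p'₁ ω := by
    filter_upwards [hfix₁] with ω h hω
    have hω' : q₀ ω ≤ lam * q₁ ω := hω
    rcases max_choice (c₁ * q₀ ω) (p'₁ ω) with h' | h'
    · have hq₁ : q₁ ω = c₁ * q₀ ω := by rw [h, h']
      have hq0 : q₀ ω = 0 := by nlinarith [hq₀nonneg ω]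
      have hp'le : p'₁ ω ≤ q₁ ω := by rw [h]; exact le_max_right _ _
      have : q₁ ω = 0 := by rw [hq₁, hq0, mul_zero]
      have := h₁nonneg ω
      linarith
    · rw [h, h']
  -- Set-integral comparisons
  have hIc0 : ∫ ω in Aᶜ, q₀ ω ∂μ ≤ ∫ ω in Aᶜ, p₀ ω ∂μ := by
    have h1 : ∫ ω in Aᶜ, q₀ ω ∂μ = ∫ ω in Aᶜ, p'₀ ω ∂μ := setIntegral_congr_ae hA.compl ha
    have h2 : ∫ ω in Aᶜ, p'₀ ω ∂μ ≤ ∫ ω in Aᶜ, p₀ ω ∂μ :=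
      integral_mono_ae hint'₀.restrict hp₀int.restrict (ae_restrict_of_ae hp₀band)
    linarith
  have hI0 : ∫ ω in A, p₀ ω ∂μ ≤ ∫ ω in A, q₀ ω ∂μ := by
    have e1 := integral_add_compl hA hp₀int
    have e2 := integral_add_compl hA hq₀int
    rw [hp₀one] at e1; rw [hq₀one] at e2
    linarith
  have hIa1 : ∫ ω in A, q₁ ω ∂μ ≤ ∫ ω in A, p₁ ω ∂μ := by
    have h1 : ∫ ω in A, q₁ ω ∂μ = ∫ ω in A, p'₁ ω ∂μ := setIntegral_congr_ae hA hb
    have h2 : ∫ ω in A, p'₁ ω ∂μ ≤ ∫ ω in A, p₁ ω ∂μ :=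
      integral_mono_ae hint'₁.restrict hp₁int.restrict (ae_restrict_of_ae hp₁band)
    linarith
  have hI1 : ∫ ω in Aᶜ, p₁ ω ∂μ ≤ ∫ ω in Aᶜ, q₁ ω ∂μ := by
    have e1 := integral_add_compl hA hp₁int
    have e2 := integral_add_compl hA hq₁int
    rw [hp₁one] at e1; rw [hq₁one] at e2
    linarith
  -- Piecewise decompositions
  have hPpw : Integrable (A.piecewise p₀ fun ω => lam * p₁ ω) μ :=
    Integrable.piecewise hA hp₀int.integrableOn hlp₁int.integrableOn
  have hstep1 : ∫ ω, min (p₀ ω) (lam * p₁ ω) ∂μ ≤ ∫ ω, A.piecewise p₀ (fun ω => lam * p₁ ω) ω ∂μ := by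
    refine integral_mono_ae hminP hPpw (Filter.Eventually.of_forall fun ω => ?_)
    by_cases h : ω ∈ A
    · simp [Set.piecewise, h, min_le_left]
    · simp [Set.piecewise, h, min_le_right]
  have hstep2 : ∫ ω, A.piecewise p₀ (fun ω => lam * p₁ ω) ω ∂μ
      = (∫ ω in A, p₀ ω ∂μ) + ∫ ω in Aᶜ, lam * p₁ ω ∂μ :=
    integral_piecewise hA hp₀int.integrableOn hlp₁int.integrableOn
  have hstep3 : ∫ ω, min (q₀ ω) (lam * q₁ ω) ∂μ
      = (∫ ω in A, q₀ ω ∂μ) + ∫ ω in Aᶜ, lam * q₁ ω ∂μ := by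
    have heq : ∀ ω, min (q₀ ω) (lam * q₁ ω) = A.piecewise q₀ (fun ω => lam * q₁ ω) ω := by
      intro ω
      by_cases h : ω ∈ A
      · simp [Set.piecewise, h, min_eq_left (hmemA ω |>.mp h)]
      · have h' : ¬ q₀ ω ≤ lam * q₁ ω := h
        simp [Set.piecewise, h, min_eq_right (le_of_lt (not_le.mp h'))]
    rw [integral_congr_ae (Filter.Eventually.of_forall heq)]
    exact integral_piecewise hA hq₀int.integrableOn hlq₁int.integrableOn
  have hlamside : ∫ ω in Aᶜ, lam * p₁ ω ∂μ ≤ ∫ ω in Aᶜ, lam * q₁ ω ∂μ := by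
    rw [integral_const_mul, integral_const_mul]
    exact mul_le_mul_of_nonneg_left hI1 hlam
  rw [hstep3]
  calc ∫ ω, min (p₀ ω) (lam * p₁ ω) ∂μ
      ≤ (∫ ω in A, p₀ ω ∂μ) + ∫ ω in Aᶜ, lam * p₁ ω ∂μ := hstep2 ▸ hstep1
    _ ≤ (∫ ω in A, q₀ ω ∂μ) + ∫ ω in Aᶜ, lam * q₁ ω ∂μ := add_le_add hI0 hlamside
end

section
/- (Monotonicity and Lipschitz continuity of the normalization function g.) Let (Ω, 𝔉, μ) be a σ-finite measure space, let p', p'' : Ω → ℝ be measurable with 0 ≤ p' ≤ p'' pointwise and p' integrable, and let p : Ω → ℝ be nonnegative, measurable and integrable. Define g(c) = ∫ min(p'', max(c·p, p')) dμ for c ≥ 0. Then g is real-valued and nondecreasing on [0, ∞), and for all 0 ≤ c ≤ d: g(d) − g(c) ≤ (d − c)·∫ p dμ; in particular g is Lipschitz continuous on [0, ∞). -/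
open MeasureTheory

/-- Monotonicity and Lipschitz continuity of the normalization function
`g(c) = ∫ min(p'', max(c·p, p')) dμ` on `[0, ∞)`. -/
theorem band_normalization_monotone_lipschitz {Ω : Type*} [MeasurableSpace Ω]
    (μ : Measure Ω) [SigmaFinite μ]
    (p' p'' p : Ω → ℝ)
    (hm' : Measurable p') (hm'' : Measurable p'') (hmp : Measurable p)
    (hnonneg : ∀ ω, 0 ≤ p' ω) (hle : ∀ ω, p' ω ≤ p'' ω)
    (hint' : Integrable p' μ)
    (hpnonneg : ∀ ω, 0 ≤ p ω) (hpint : Integrable p μ)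
    (g : ℝ → ℝ)
    (hg : ∀ c, g c = ∫ ω, min (p'' ω) (max (c * p ω) (p' ω)) ∂μ) :
    (∀ c, 0 ≤ c → Integrable (fun ω => min (p'' ω) (max (c * p ω) (p' ω))) μ)
    ∧ MonotoneOn g (Set.Ici 0)
    ∧ (∀ c d, 0 ≤ c → c ≤ d → g d - g c ≤ (d - c) * ∫ ω, p ω ∂μ)
    ∧ LipschitzOnWith (∫ ω, p ω ∂μ).toNNReal g (Set.Ici 0) := by
  -- integrability
  have hint : ∀ c : ℝ, 0 ≤ c →
      Integrable (fun ω => min (p'' ω) (max (c * p ω) (p' ω))) μ := by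
    intro c hc
    have hmeas : AEStronglyMeasurable (fun ω => min (p'' ω) (max (c * p ω) (p' ω))) μ :=
      (hm''.min ((hmp.const_mul c).max hm')).aestronglyMeasurable
    refine Integrable.mono (hint'.add (hpint.const_mul c)) hmeas ?_
    filter_upwards with ω
    have h1 : 0 ≤ min (p'' ω) (max (c * p ω) (p' ω)) :=
      le_min ((hnonneg ω).trans (hle ω)) (le_max_of_le_right (hnonneg ω))
    have h2 : min (p'' ω) (max (c * p ω) (p' ω)) ≤ p' ω + c * p ω := by
      refine (min_le_right _ _).trans (max_le ?_ ?_)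
      · nlinarith [hnonneg ω]
      · nlinarith [mul_nonneg hc (hpnonneg ω)]
    have h3 : 0 ≤ p' ω + c * p ω := add_nonneg (hnonneg ω) (mul_nonneg hc (hpnonneg ω))
    simp only [Pi.add_apply]
    rw [Real.norm_eq_abs, Real.norm_eq_abs, abs_of_nonneg h1, abs_of_nonneg h3]
    exact h2
  -- pointwise monotonicity
  have hptmono : ∀ c d : ℝ, c ≤ d → ∀ ω,
      min (p'' ω) (max (c * p ω) (p' ω)) ≤ min (p'' ω) (max (d * p ω) (p' ω)) := by
    intro c d hcd ω
    exact min_le_min le_rfl (max_le_max (mul_le_mul_of_nonneg_right hcd (hpnonneg ω)) le_rfl)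
  -- pointwise Lipschitz
  have hptlip : ∀ c d : ℝ, c ≤ d → ∀ ω,
      min (p'' ω) (max (d * p ω) (p' ω)) - min (p'' ω) (max (c * p ω) (p' ω))
        ≤ (d - c) * p ω := by
    intro c d hcd ω
    have hp := hpnonneg ω
    have hdc : 0 ≤ (d - c) * p ω := mul_nonneg (by linarith) hp
    rcases le_total (p'' ω) (max (c * p ω) (p' ω)) with h | h
    · have : min (p'' ω) (max (d * p ω) (p' ω)) ≤ p'' ω := min_le_left _ _
      rw [min_eq_left h]
      linarith
    · rw [min_eq_right h]
      have h2 : max (d * p ω) (p' ω) ≤ max (c * p ω) (p' ω) + (d - c) * p ω := by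
        refine max_le (by linarith [le_max_left (c * p ω) (p' ω)]) (by linarith [le_max_right (c * p ω) (p' ω)])
      exact le_trans (sub_le_sub_right (min_le_right _ _) _) (by linarith)
  have hgmono : MonotoneOn g (Set.Ici 0) := by
    intro c hc d hd hcd
    rw [hg c, hg d]
    exact integral_mono (hint c hc) (hint d hd) (hptmono c d hcd)
  have hlipkey : ∀ c d : ℝ, 0 ≤ c → c ≤ d → g d - g c ≤ (d - c) * ∫ ω, p ω ∂μ := by
    intro c d hc hcd
    have hd : (0:ℝ) ≤ d := hc.trans hcd
    rw [hg c, hg d, ← integral_sub (hint d hd) (hint c hc)]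
    have : (d - c) * ∫ ω, p ω ∂μ = ∫ ω, (d - c) * p ω ∂μ := (integral_const_mul _ _).symm
    rw [this]
    exact integral_mono ((hint d hd).sub (hint c hc)) (hpint.const_mul _) (hptlip c d hcd)
  refine ⟨hint, hgmono, hlipkey, ?_⟩
  have hIp : (0:ℝ) ≤ ∫ ω, p ω ∂μ := integral_nonneg hpnonneg
  refine LipschitzOnWith.of_dist_le_mul ?_
  intro x hx y hy
  simp only [Set.mem_Ici] at hx hy
  rw [Real.dist_eq, Real.dist_eq, Real.coe_toNNReal _ hIp]
  rcases le_total x y with h | h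
  · rw [abs_of_nonpos (by linarith [hgmono hx hy h]), abs_of_nonpos (by linarith)]
    have := hlipkey x y hx h
    linarith
  · rw [abs_of_nonneg (by linarith [hgmono hy hx h]), abs_of_nonneg (by linarith)]
    have := hlipkey y x hy h
    linarith
end

section
/- (Lemma 1, existence of the normalizing constant.) Let (Ω, 𝔉, μ) be a σ-finite measure space, let p'₀, p''₀ : Ω → ℝ be measurable with 0 ≤ p'₀ ≤ p''₀ pointwise, p'₀ integrable and ∫ p'₀ dμ < 1. Let α > 0, let p₀ be a μ-density with p'₀ ≤ p₀ ≤ p''₀ μ-a.e., and let p₁ be a μ-density. Then there exists c with 0 < c ≤ 1/α such that ∫ min(p''₀, max(c·(α·p₀ + p₁), p'₀)) dμ = 1. -/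
open MeasureTheory

/-- Lemma 1: existence of the normalizing constant `c ∈ (0, 1/α]` with
`∫ min(p''₀, max(c·(α·p₀ + p₁), p'₀)) dμ = 1`. -/
theorem band_normalizing_constant_exists {Ω : Type*} [MeasurableSpace Ω]
    (μ : Measure Ω) [SigmaFinite μ]
    (p'₀ p''₀ : Ω → ℝ)
    (hm'₀ : Measurable p'₀) (hm''₀ : Measurable p''₀)
    (h₀nonneg : ∀ ω, 0 ≤ p'₀ ω) (h₀le : ∀ ω, p'₀ ω ≤ p''₀ ω)
    (hint'₀ : Integrable p'₀ μ) (hmass : ∫ ω, p'₀ ω ∂μ < 1)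
    (α : ℝ) (hα : 0 < α)
    (p₀ : Ω → ℝ)
    (hp₀m : Measurable p₀) (hp₀nonneg : ∀ ω, 0 ≤ p₀ ω)
    (hp₀int : Integrable p₀ μ) (hp₀one : ∫ ω, p₀ ω ∂μ = 1)
    (hp₀band : ∀ᵐ ω ∂μ, p'₀ ω ≤ p₀ ω ∧ p₀ ω ≤ p''₀ ω)
    (p₁ : Ω → ℝ)
    (hp₁m : Measurable p₁) (hp₁nonneg : ∀ ω, 0 ≤ p₁ ω)
    (hp₁int : Integrable p₁ μ) (hp₁one : ∫ ω, p₁ ω ∂μ = 1) :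
    ∃ c : ℝ, 0 < c ∧ c ≤ 1 / α ∧
      ∫ ω, min (p''₀ ω) (max (c * (α * p₀ ω + p₁ ω)) (p'₀ ω)) ∂μ = 1 := by
  set β : ℝ := 1 / α with hβ
  have hβpos : 0 < β := by positivity
  set cl : ℝ → ℝ := fun c => max 0 (min c β) with hcl
  set s : Ω → ℝ := fun ω => α * p₀ ω + p₁ ω with hs
  have hs_nonneg : ∀ ω, 0 ≤ s ω := fun ω => by
    have := hp₀nonneg ω; have := hp₁nonneg ω; simp only [hs]; positivity
  set f : ℝ → Ω → ℝ := fun c ω => min (p''₀ ω) (max (cl c * s ω) (p'₀ ω)) with hf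
  set bound : Ω → ℝ := fun ω => β * s ω + p'₀ ω with hbd
  have hcl_mem : ∀ c, cl c ∈ Set.Icc (0:ℝ) β := fun c =>
    ⟨le_max_left _ _, max_le hβpos.le (min_le_right _ _)⟩
  have hf_nonneg : ∀ c ω, 0 ≤ f c ω := fun c ω =>
    le_min ((h₀nonneg ω).trans (h₀le ω)) (le_max_of_le_right (h₀nonneg ω))
  have hf_le_bound : ∀ c ω, f c ω ≤ bound ω := by
    intro c ω
    have h1 : cl c * s ω ≤ β * s ω :=
      mul_le_mul_of_nonneg_right (hcl_mem c).2 (hs_nonneg ω)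
    have h2 : max (cl c * s ω) (p'₀ ω) ≤ β * s ω + p'₀ ω := by
      apply max_le
      · exact h1.trans (le_add_of_nonneg_right (h₀nonneg ω))
      · exact le_add_of_nonneg_left (mul_nonneg hβpos.le (hs_nonneg ω))
    exact (min_le_right _ _).trans h2
  have hsm : Measurable s := (hp₀m.const_mul α).add hp₁m
  have hfm : ∀ c, Measurable (f c) := fun c =>
    hm''₀.min ((hsm.const_mul (cl c)).max hm'₀)
  have hbound_int : Integrable bound μ :=
    (((hp₀int.const_mul α).add hp₁int).const_mul β).add hint'₀
  have hf_int : ∀ c, Integrable (f c) μ := fun c =>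
    hbound_int.mono' (hfm c).aestronglyMeasurable
      (Filter.Eventually.of_forall fun ω => by
        rw [Real.norm_of_nonneg (hf_nonneg c ω)]; exact hf_le_bound c ω)
  set G : ℝ → ℝ := fun c => ∫ ω, f c ω ∂μ with hG
  have hGcont : Continuous G := by
    apply continuous_of_dominated (fun c => (hfm c).aestronglyMeasurable)
      (fun c => Filter.Eventually.of_forall fun ω => by
        rw [Real.norm_of_nonneg (hf_nonneg c ω)]; exact hf_le_bound c ω)
      hbound_int
    refine Filter.Eventually.of_forall fun ω => ?_
    have hclc : Continuous cl := continuous_const.max (continuous_id.min continuous_const)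
    exact continuous_const.min (((hclc.mul continuous_const).max continuous_const))
  have hG0 : G 0 = ∫ ω, p'₀ ω ∂μ := by
    apply integral_congr_ae
    refine Filter.Eventually.of_forall fun ω => ?_
    have : cl 0 = 0 := by simp [hcl, hβpos.le]
    simp [hf, this, max_eq_right (h₀nonneg ω), min_eq_right (h₀le ω)]
  have hGβ : 1 ≤ G β := by
    have hae : ∀ᵐ ω ∂μ, p₀ ω ≤ f β ω := by
      filter_upwards [hp₀band] with ω hω
      have hclβ : cl β = β := by simp [hcl, hβpos.le]
      have hβα : β * α = 1 := by rw [hβ, one_div, inv_mul_cancel₀ hα.ne']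
      have h1 : p₀ ω ≤ β * s ω := by
        have : β * s ω = p₀ ω + β * p₁ ω := by
          simp only [hs]; rw [mul_add, ← mul_assoc, hβα, one_mul]
        rw [this]
        have := hp₁nonneg ω
        nlinarith
      exact le_min hω.2 (le_max_of_le_left (by rw [hclβ]; exact h1))
    calc (1:ℝ) = ∫ ω, p₀ ω ∂μ := hp₀one.symm
    _ ≤ G β := integral_mono_ae hp₀int (hf_int β) hae
  have hivt := intermediate_value_Icc hβpos.le hGcont.continuousOn
  have h1mem : (1:ℝ) ∈ Set.Icc (G 0) (G β) := ⟨by rw [hG0]; exact hmass.le, hGβ⟩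
  obtain ⟨c, hcmem, hGc⟩ := hivt h1mem
  have hcpos : 0 < c := by
    rcases lt_or_eq_of_le hcmem.1 with h | h
    · exact h
    · exfalso; rw [← h] at hGc; rw [hG0] at hGc; exact absurd hGc (ne_of_lt hmass)
  refine ⟨c, hcpos, hcmem.2, ?_⟩
  have hclc : cl c = c := by
    simp [hcl, min_eq_left hcmem.2, hcpos.le]
  rw [← hGc]
  apply integral_congr_ae
  exact Filter.Eventually.of_forall fun ω => by simp [hf, hclc, hs]
end

section
/- (Key contraction inequality in the convergence proof of Algorithm 1 for α > 0.) Let (Ω, 𝔉, μ) be a σ-finite measure space, let π ∈ (0, 1), and let r₀, r₁, q₀, q₁ : Ω → ℝ be integrable. Suppose the two L¹ minimality inequalities hold: ∫ |q₀ − (π·r₀ + (1 − π)·r₁)| dμ ≤ ∫ |r₀ − (π·r₀ + (1 − π)·r₁)| dμ and ∫ |q₁ − (π·q₀ + (1 − π)·r₁)| dμ ≤ ∫ |r₁ − (π·q₀ + (1 − π)·r₁)| dμ. Then ∫ |q₀ − q₁| dμ ≤ ∫ |r₀ − r₁| dμ. -/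
open MeasureTheory

/-- Key contraction inequality in the convergence proof of Algorithm 1 for `α > 0`:
if each new iterate is at least as close in `L¹` to the relevant convex combination as
the previous iterate, then `‖q₀ − q₁‖₁ ≤ ‖r₀ − r₁‖₁`. -/
theorem algorithm_contraction {Ω : Type*} [MeasurableSpace Ω]
    (μ : Measure Ω) [SigmaFinite μ]
    (π : ℝ) (hπ : π ∈ Set.Ioo (0 : ℝ) 1)
    (r₀ r₁ q₀ q₁ : Ω → ℝ)
    (hr₀ : Integrable r₀ μ) (hr₁ : Integrable r₁ μ)
    (hq₀ : Integrable q₀ μ) (hq₁ : Integrable q₁ μ)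
    (hmin₀ : ∫ ω, |q₀ ω - (π * r₀ ω + (1 - π) * r₁ ω)| ∂μ
            ≤ ∫ ω, |r₀ ω - (π * r₀ ω + (1 - π) * r₁ ω)| ∂μ)
    (hmin₁ : ∫ ω, |q₁ ω - (π * q₀ ω + (1 - π) * r₁ ω)| ∂μ
            ≤ ∫ ω, |r₁ ω - (π * q₀ ω + (1 - π) * r₁ ω)| ∂μ) :
    ∫ ω, |q₀ ω - q₁ ω| ∂μ ≤ ∫ ω, |r₀ ω - r₁ ω| ∂μ := by
  obtain ⟨hπ0, hπ1⟩ := hπ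
  have h1π : (0:ℝ) ≤ 1 - π := by linarith
  have hπ0' : (0:ℝ) ≤ π := le_of_lt hπ0
  -- integrable combos
  have hM₀ : Integrable (fun ω => π * r₀ ω + (1 - π) * r₁ ω) μ :=
    (hr₀.const_mul π).add (hr₁.const_mul (1 - π))
  have hM₁ : Integrable (fun ω => π * q₀ ω + (1 - π) * r₁ ω) μ :=
    (hq₀.const_mul π).add (hr₁.const_mul (1 - π))
  have hI1 : Integrable (fun ω => |q₀ ω - (π * r₀ ω + (1 - π) * r₁ ω)|) μ :=
    (hq₀.sub hM₀).abs
  have hI2 : Integrable (fun ω => |q₁ ω - (π * q₀ ω + (1 - π) * r₁ ω)|) μ :=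
    (hq₁.sub hM₁).abs
  have hIr : Integrable (fun ω => |r₀ ω - r₁ ω|) μ := (hr₀.sub hr₁).abs
  have hIqr : Integrable (fun ω => |q₀ ω - r₁ ω|) μ := (hq₀.sub hr₁).abs
  -- rewrite RHS of hmin₀
  have hrw₀ : ∫ ω, |r₀ ω - (π * r₀ ω + (1 - π) * r₁ ω)| ∂μ
      = (1 - π) * ∫ ω, |r₀ ω - r₁ ω| ∂μ := by
    rw [← integral_const_mul]
    congr 1; funext ω
    rw [show r₀ ω - (π * r₀ ω + (1 - π) * r₁ ω) = (1 - π) * (r₀ ω - r₁ ω) by ring,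
      abs_mul, abs_of_nonneg h1π]
  have hrw₁ : ∫ ω, |r₁ ω - (π * q₀ ω + (1 - π) * r₁ ω)| ∂μ
      = π * ∫ ω, |q₀ ω - r₁ ω| ∂μ := by
    rw [← integral_const_mul]
    congr 1; funext ω
    rw [show r₁ ω - (π * q₀ ω + (1 - π) * r₁ ω) = -(π * (q₀ ω - r₁ ω)) by ring,
      abs_neg, abs_mul, abs_of_nonneg hπ0']
  -- step 1: ∫|q₀ - r₁| ≤ ∫|r₀ - r₁|
  have step1 : ∫ ω, |q₀ ω - r₁ ω| ∂μ ≤ ∫ ω, |r₀ ω - r₁ ω| ∂μ := by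
    have htri : ∫ ω, |q₀ ω - r₁ ω| ∂μ
        ≤ ∫ ω, (|q₀ ω - (π * r₀ ω + (1 - π) * r₁ ω)| + π * |r₀ ω - r₁ ω|) ∂μ := by
      apply integral_mono hIqr (hI1.add (hIr.const_mul π))
      intro ω
      have : q₀ ω - r₁ ω = (q₀ ω - (π * r₀ ω + (1 - π) * r₁ ω)) + π * (r₀ ω - r₁ ω) := by
        ring
      calc |q₀ ω - r₁ ω| ≤ |q₀ ω - (π * r₀ ω + (1 - π) * r₁ ω)| + |π * (r₀ ω - r₁ ω)| := by
            rw [this]; exact abs_add_le _ _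
        _ = |q₀ ω - (π * r₀ ω + (1 - π) * r₁ ω)| + π * |r₀ ω - r₁ ω| := by
            rw [abs_mul, abs_of_nonneg hπ0']
    rw [integral_add hI1 (hIr.const_mul π), integral_const_mul] at htri
    have := hmin₀
    rw [hrw₀] at this
    linarith
  -- step 2: ∫|q₀ - q₁| ≤ ∫|q₀ - r₁|
  have step2 : ∫ ω, |q₀ ω - q₁ ω| ∂μ ≤ ∫ ω, |q₀ ω - r₁ ω| ∂μ := by
    have htri : ∫ ω, |q₀ ω - q₁ ω| ∂μ
        ≤ ∫ ω, (|q₁ ω - (π * q₀ ω + (1 - π) * r₁ ω)| + (1 - π) * |q₀ ω - r₁ ω|) ∂μ := by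
      apply integral_mono (hq₀.sub hq₁).abs (hI2.add (hIqr.const_mul (1 - π)))
      intro ω
      have heq : q₀ ω - q₁ ω
          = -((q₁ ω - (π * q₀ ω + (1 - π) * r₁ ω))) + (1 - π) * (q₀ ω - r₁ ω) := by
        ring
      calc |q₀ ω - q₁ ω|
          ≤ |-(q₁ ω - (π * q₀ ω + (1 - π) * r₁ ω))| + |(1 - π) * (q₀ ω - r₁ ω)| := by
            rw [heq]; exact abs_add_le _ _
        _ = |q₁ ω - (π * q₀ ω + (1 - π) * r₁ ω)| + (1 - π) * |q₀ ω - r₁ ω| := by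
            rw [abs_neg, abs_mul, abs_of_nonneg h1π]
    rw [integral_add hI2 (hIqr.const_mul (1 - π)), integral_const_mul] at htri
    have := hmin₁
    rw [hrw₁] at this
    linarith
  linarith
end

section
/- (Corollary 1 for the total variation distance: the band fixed-point formula gives the L¹ projection onto a density band.) Let (Ω, 𝔉, μ) be a σ-finite measure space, let q', q'' : Ω → ℝ be measurable with 0 ≤ q' ≤ q'' pointwise and q' integrable, let p be a μ-density and let c > 0. Suppose the function q* = min(q'', max(c·p, q')) satisfies ∫ q* dμ = 1. Then for every μ-density q with q' ≤ q ≤ q'' μ-a.e.: ∫ |p − q*| dμ ≤ ∫ |p − q| dμ. -/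
open MeasureTheory

/-- Corollary 1 for the total variation distance: the band fixed-point formula
`q* = min(q'', max(c·p, q'))` gives the `L¹` projection of `p` onto the density band. -/
theorem band_projection_L1 {Ω : Type*} [MeasurableSpace Ω]
    (μ : Measure Ω) [SigmaFinite μ]
    (q' q'' : Ω → ℝ)
    (hm' : Measurable q') (hm'' : Measurable q'')
    (hnonneg : ∀ ω, 0 ≤ q' ω) (hle : ∀ ω, q' ω ≤ q'' ω)
    (hint' : Integrable q' μ)
    (p : Ω → ℝ)
    (hpm : Measurable p) (hpnonneg : ∀ ω, 0 ≤ p ω)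
    (hpint : Integrable p μ) (hpone : ∫ ω, p ω ∂μ = 1)
    (c : ℝ) (hc : 0 < c)
    (qstar : Ω → ℝ)
    (hqstar : ∀ ω, qstar ω = min (q'' ω) (max (c * p ω) (q' ω)))
    (hqstarone : ∫ ω, qstar ω ∂μ = 1)
    (q : Ω → ℝ)
    (hqm : Measurable q) (hqnonneg : ∀ ω, 0 ≤ q ω)
    (hqint : Integrable q μ) (hqone : ∫ ω, q ω ∂μ = 1)
    (hqband : ∀ᵐ ω ∂μ, q' ω ≤ q ω ∧ q ω ≤ q'' ω) :
    ∫ ω, |p ω - qstar ω| ∂μ ≤ ∫ ω, |p ω - q ω| ∂μ := by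
  classical
  set t : ℝ := if 1 ≤ c then 1 else -1 with ht
  set s : Ω → ℝ := fun ω => if qstar ω < p ω then 1 else if p ω < qstar ω then -1 else -t
    with hs
  have htabs : |t| = 1 := by rw [ht]; split_ifs <;> norm_num
  have hqsm : Measurable qstar := by
    have hq : qstar = fun ω => min (q'' ω) (max (c * p ω) (q' ω)) := funext hqstar
    rw [hq]; exact hm''.min ((measurable_const.mul hpm).max hm')
  have hsm : Measurable s := by
    refine Measurable.ite (measurableSet_lt hqsm hpm) measurable_const ?_
    exact Measurable.ite (measurableSet_lt hpm hqsm) measurable_const measurable_const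
  have hqs_nonneg : ∀ ω, 0 ≤ qstar ω := fun ω => by
    rw [hqstar]
    exact le_min ((hnonneg ω).trans (hle ω)) (le_max_of_le_right (hnonneg ω))
  have hqs_int : Integrable qstar μ := by
    refine Integrable.mono' ((hpint.const_mul c).add hint') hqsm.aestronglyMeasurable
      (ae_of_all _ fun ω => ?_)
    rw [Real.norm_eq_abs, abs_of_nonneg (hqs_nonneg ω), hqstar]
    exact (min_le_right _ _).trans (max_le (le_add_of_nonneg_right (hnonneg ω))
      (le_add_of_nonneg_left (mul_nonneg hc.le (hpnonneg ω))))
  have hsabs : ∀ ω, |s ω| ≤ 1 := fun ω => by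
    simp only [hs]
    split_ifs
    · norm_num
    · norm_num
    · rw [abs_neg, htabs]
  have hsp : ∀ ω, s ω * (p ω - qstar ω) = |p ω - qstar ω| := fun ω => by
    simp only [hs]
    rcases lt_trichotomy (qstar ω) (p ω) with h | h | h
    · rw [if_pos h, one_mul, abs_of_pos (sub_pos.mpr h)]
    · rw [if_neg (by rw [h]; exact lt_irrefl _), if_neg (by rw [h]; exact lt_irrefl _),
        ← h, sub_self, mul_zero, abs_zero]
    · rw [if_neg (by exact fun hh => absurd (hh.trans h) (lt_irrefl _)), if_pos h,
        abs_of_neg (by linarith)]; ring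
  -- pointwise inequality
  have h1 : ∀ ω, |p ω - qstar ω| + s ω * (qstar ω - q ω) ≤ |p ω - q ω| := fun ω => by
    have h2 : s ω * (p ω - q ω) ≤ |p ω - q ω| := by
      calc s ω * (p ω - q ω) ≤ |s ω * (p ω - q ω)| := le_abs_self _
        _ = |s ω| * |p ω - q ω| := abs_mul _ _
        _ ≤ 1 * |p ω - q ω| := mul_le_mul_of_nonneg_right (hsabs ω) (abs_nonneg _)
        _ = |p ω - q ω| := one_mul _
    have h3 := hsp ω
    nlinarith [h2, h3]
  -- a.e. nonnegativity of (s + t) * (qstar - q)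
  have h2 : ∀ᵐ ω ∂μ, 0 ≤ (s ω + t) * (qstar ω - q ω) := by
    filter_upwards [hqband] with ω hb
    by_cases hct : 1 ≤ c
    · have ht1 : t = 1 := if_pos hct
      rcases lt_trichotomy (qstar ω) (p ω) with h | h | h
      · -- qstar ω = q'' ω
        have hcp : qstar ω < c * p ω := h.trans_le (le_mul_of_one_le_left (hpnonneg ω) hct)
        have hq'' : qstar ω = q'' ω := by
          rcases min_choice (q'' ω) (max (c * p ω) (q' ω)) with he | he
          · rw [hqstar, he]
          · exfalso
            have h4 : qstar ω = max (c * p ω) (q' ω) := by rw [hqstar, he]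
            have h5 : c * p ω ≤ qstar ω := h4 ▸ le_max_left _ _
            linarith
        have hsω : s ω = 1 := by simp only [hs]; exact if_pos h
        have : 0 ≤ qstar ω - q ω := by rw [hq'']; linarith [hb.2]
        rw [hsω, ht1]; linarith
      · have hsω : s ω = -t := by
          simp only [hs]
          rw [if_neg (by rw [h]; exact lt_irrefl _), if_neg (by rw [h]; exact lt_irrefl _)]
        rw [hsω]; ring_nf; simp
      · have hsω : s ω = -1 := by
          simp only [hs]
          rw [if_neg (by exact fun hh => absurd (hh.trans h) (lt_irrefl _)), if_pos h]
        rw [hsω, ht1]; ring_nf; simp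
    · have ht1 : t = -1 := if_neg hct
      rcases lt_trichotomy (qstar ω) (p ω) with h | h | h
      · have hsω : s ω = 1 := by simp only [hs]; exact if_pos h
        rw [hsω, ht1]; ring_nf; simp
      · have hsω : s ω = -t := by
          simp only [hs]
          rw [if_neg (by rw [h]; exact lt_irrefl _), if_neg (by rw [h]; exact lt_irrefl _)]
        rw [hsω]; ring_nf; simp
      · -- qstar ω = q' ω
        have hcp : c * p ω < qstar ω :=
          lt_of_le_of_lt (mul_le_of_le_one_left (hpnonneg ω) (le_of_not_ge hct)) h
        have hq' : qstar ω = q' ω := by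
          rcases max_choice (c * p ω) (q' ω) with he | he
          · exfalso
            have h5 : qstar ω ≤ max (c * p ω) (q' ω) := by rw [hqstar]; exact min_le_right _ _
            rw [he] at h5; linarith
          · rw [hqstar, he]; exact min_eq_right (hle ω)
        have hsω : s ω = -1 := by
          simp only [hs]
          rw [if_neg (by exact fun hh => absurd (hh.trans h) (lt_irrefl _)), if_pos h]
        have : qstar ω - q ω ≤ 0 := by rw [hq']; linarith [hb.1]
        rw [hsω, ht1]; nlinarith
  -- integrability of the correction term
  have hsub_int : Integrable (fun ω => qstar ω - q ω) μ := hqs_int.sub hqint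
  have hD_int : Integrable (fun ω => s ω * (qstar ω - q ω)) μ := by
    refine Integrable.mono' hsub_int.abs ((hsm.mul (hqsm.sub hqm)).aestronglyMeasurable)
      (ae_of_all _ fun ω => ?_)
    rw [Real.norm_eq_abs, abs_mul]
    calc |s ω| * |qstar ω - q ω| ≤ 1 * |qstar ω - q ω| :=
          mul_le_mul_of_nonneg_right (hsabs ω) (abs_nonneg _)
      _ = |qstar ω - q ω| := one_mul _
  have hsub0 : ∫ ω, (qstar ω - q ω) ∂μ = 0 := by
    rw [integral_sub hqs_int hqint, hqstarone, hqone]; ring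
  have hexp : ∫ ω, (s ω + t) * (qstar ω - q ω) ∂μ = ∫ ω, s ω * (qstar ω - q ω) ∂μ := by
    have heq : (fun ω => (s ω + t) * (qstar ω - q ω))
        = fun ω => s ω * (qstar ω - q ω) + t * (qstar ω - q ω) := by
      funext ω; ring
    have hz : ∫ ω, t * (qstar ω - q ω) ∂μ = 0 := by
      rw [integral_const_mul, hsub0, mul_zero]
    rw [heq, integral_add hD_int (hsub_int.const_mul t), hz, add_zero]
  have key : (0:ℝ) ≤ ∫ ω, s ω * (qstar ω - q ω) ∂μ := by
    rw [← hexp]; exact integral_nonneg_of_ae h2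
  have habs_int : Integrable (fun ω => |p ω - qstar ω|) μ := (hpint.sub hqs_int).abs
  have habs_int' : Integrable (fun ω => |p ω - q ω|) μ := (hpint.sub hqint).abs
  calc ∫ ω, |p ω - qstar ω| ∂μ
      ≤ ∫ ω, |p ω - qstar ω| ∂μ + ∫ ω, s ω * (qstar ω - q ω) ∂μ := by linarith
    _ = ∫ ω, (|p ω - qstar ω| + s ω * (qstar ω - q ω)) ∂μ :=
        (integral_add habs_int hD_int).symm
    _ ≤ ∫ ω, |p ω - q ω| ∂μ :=
        integral_mono (habs_int.add hD_int) habs_int' fun ω => h1 ω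
end

section
/- (Corollary 1: the band fixed-point formula jointly minimizes all f-divergences to a fixed density.) Let (Ω, 𝔉, μ) be a σ-finite measure space, let q', q'' : Ω → ℝ be measurable with 0 < q' ≤ q'' μ-a.e. and q' integrable, let p be a μ-density and let c > 0. Suppose q* = min(q'', max(c·p, q')) satisfies ∫ q* dμ = 1. Then for every convex function f : [0, ∞) → ℝ and every μ-density q with q' ≤ q ≤ q'' μ-a.e. such that both ω ↦ q(ω)·f(p(ω)/q(ω)) and ω ↦ q*(ω)·f(p(ω)/q*(ω)) are μ-integrable: ∫ q*·f(p/q*) dμ ≤ ∫ q·f(p/q) dμ; that is, q* minimizes the f-divergence D_f(P‖Q) = ∫ q·f(p/q) dμ over the density band [q', q''] simultaneously for all convex f. -/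
open MeasureTheory

/-- A convex function on `[0, ∞)` has a subgradient at any interior point `w > 0`. -/
lemma exists_subgradient_aux (f : ℝ → ℝ) (hf : ConvexOn ℝ (Set.Ici 0) f)
    (w : ℝ) (hw : 0 < w) :
    ∃ k : ℝ, ∀ y, 0 ≤ y → f w + k * (y - w) ≤ f y := by
  set S : Set ℝ := (fun x => (f w - f x) / (w - x)) '' Set.Ico 0 w with hS
  have hne : S.Nonempty := ⟨_, ⟨0, ⟨le_refl 0, hw⟩, rfl⟩⟩
  have hbdd : BddAbove S := by
    refine ⟨(f (w + 1) - f w) / (w + 1 - w), ?_⟩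
    rintro r ⟨x, ⟨hx0, hxw⟩, rfl⟩
    exact hf.slope_mono_adjacent (Set.mem_Ici.mpr hx0)
      (Set.mem_Ici.mpr (by linarith)) hxw (by linarith)
  refine ⟨sSup S, fun y hy => ?_⟩
  rcases lt_trichotomy y w with hyw | hyw | hyw
  · have h1 : (f w - f y) / (w - y) ≤ sSup S := le_csSup hbdd ⟨y, ⟨hy, hyw⟩, rfl⟩
    have h2 : f w - f y ≤ sSup S * (w - y) := (div_le_iff₀ (by linarith)).mp h1
    nlinarith [h2]
  · subst hyw; simp
  · have h1 : sSup S ≤ (f y - f w) / (y - w) := by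
      apply csSup_le hne
      rintro r ⟨x, ⟨hx0, hxw⟩, rfl⟩
      exact hf.slope_mono_adjacent (Set.mem_Ici.mpr hx0)
        (Set.mem_Ici.mpr (by linarith)) hxw hyw
    have h2 : sSup S * (y - w) ≤ f y - f w := by
      have := mul_le_mul_of_nonneg_right h1 (by linarith : (0:ℝ) ≤ y - w)
      rwa [div_mul_cancel₀ _ (by linarith : y - w ≠ 0)] at this
    linarith

/-- Key pointwise inequality for the band projection. -/
lemma key_pointwise (f : ℝ → ℝ) (hf : ConvexOn ℝ (Set.Ici 0) f) {w k : ℝ} (hw : 0 < w)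
    (hk : ∀ y, 0 ≤ y → f w + k * (y - w) ≤ f y)
    {P Q A : ℝ} (hP : 0 ≤ P) (hQ : 0 < Q) (hA : 0 < A)
    (hcase : P = A * w ∨ (A ≤ Q ∧ P ≤ A * w) ∨ (Q ≤ A ∧ A * w ≤ P)) :
    A * f (P / A) + (f w - k * w) * (Q - A) ≤ Q * f (P / Q) := by
  set g : ℝ → ℝ := fun y => f y - f w - k * (y - w) with hg
  have hg0 : ∀ y, 0 ≤ y → 0 ≤ g y := fun y hy => by
    have := hk y hy; simp only [hg]; linarith
  have hgw : g w = 0 := by simp [hg]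
  have hA' : A ≠ 0 := ne_of_gt hA
  have hQ' : Q ≠ 0 := ne_of_gt hQ
  have eA : A * f (P / A) = A * g (P / A) + (f w - k * w) * A + k * P := by
    simp only [hg]; field_simp; ring
  have eQ : Q * f (P / Q) = Q * g (P / Q) + (f w - k * w) * Q + k * P := by
    simp only [hg]; field_simp; ring
  suffices h : A * g (P / A) ≤ Q * g (P / Q) by rw [eA, eQ]; linarith
  rcases hcase with hB | ⟨hAQ, hPA⟩ | ⟨hQA, hPA⟩
  · -- P = A * w
    have hPAw : P / A = w := by rw [hB, mul_comm, mul_div_assoc, div_self hA', mul_one]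
    rw [hPAw, hgw, mul_zero]
    exact mul_nonneg hQ.le (hg0 _ (by positivity))
  · -- A ≤ Q, P ≤ A * w
    rcases eq_or_lt_of_le hP with hP0 | hP0
    · rw [← hP0]
      simp only [zero_div]
      exact mul_le_mul_of_nonneg_right hAQ (hg0 0 le_rfl)
    · set u := P / Q with hu_def
      set v := P / A with hv_def
      have hu : 0 < u := div_pos hP0 hQ
      have hv : 0 < v := div_pos hP0 hA
      have huv : u ≤ v := by
        rw [hu_def, hv_def]; gcongr
      have hvw : v ≤ w := by
        rw [hv_def, div_le_iff₀ hA]; linarith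
      have hkey : u * g v ≤ v * g u := by
        rcases eq_or_lt_of_le huv with he | hlt
        · rw [he]
        · rcases eq_or_lt_of_le hvw with he2 | hlt2
          · rw [he2, hgw, mul_zero]
            exact mul_nonneg hw.le (hg0 u hu.le)
          · set l : ℝ := (w - v) / (w - u) with hl
            have hwu : (0:ℝ) < w - u := by linarith
            have hl0 : 0 ≤ l := div_nonneg (by linarith) (by linarith)
            have hl1 : l ≤ 1 := by
              rw [hl, div_le_one hwu]; linarith
            have hlw : l * (w - u) = w - v := by
              rw [hl]; exact div_mul_cancel₀ _ hwu.ne'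
            have hcomb : l * u + (1 - l) * w = v := by
              linear_combination -hlw
            have hfv : f v ≤ l * f u + (1 - l) * f w := by
              have := hf.2 (Set.mem_Ici.mpr hu.le) (Set.mem_Ici.mpr hw.le) hl0
                (by linarith : (0:ℝ) ≤ 1 - l) (by ring)
              simp only [smul_eq_mul] at this
              rwa [hcomb] at this
            have hvw' : v - w = l * (u - w) := by
              linear_combination hlw
            have hgv : g v ≤ l * g u := by
              simp only [hg]
              rw [hvw']
              nlinarith [hfv]
            calc u * g v ≤ u * (l * g u) := mul_le_mul_of_nonneg_left hgv hu.le
              _ ≤ u * g u := mul_le_mul_of_nonneg_left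
                  (by nlinarith [hg0 u hu.le]) hu.le
              _ ≤ v * g u := mul_le_mul_of_nonneg_right huv (hg0 u hu.le)
      have hAeq : A = P / v := by
        rw [eq_div_iff hv.ne', hv_def, mul_comm, div_mul_cancel₀ _ hA']
      have hQeq : Q = P / u := by
        rw [eq_div_iff hu.ne', hu_def, mul_comm, div_mul_cancel₀ _ hQ']
      rw [hAeq, hQeq, div_mul_eq_mul_div, div_mul_eq_mul_div,
        div_le_div_iff₀ hv hu]
      linarith [mul_le_mul_of_nonneg_left hkey hP0.le]
  · -- Q ≤ A, A * w ≤ P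
    have hP0 : 0 < P := lt_of_lt_of_le (by positivity) hPA
    set u := P / A with hu_def
    set v := P / Q with hv_def
    have hu : 0 < u := div_pos hP0 hA
    have hv : 0 < v := div_pos hP0 hQ
    have huv : u ≤ v := by
      rw [hu_def, hv_def]; gcongr
    have hwu : w ≤ u := by
      rw [hu_def, le_div_iff₀ hA]; linarith
    have hkey : v * g u ≤ u * g v := by
      rcases eq_or_lt_of_le huv with he | hlt
      · rw [he]
      · rcases eq_or_lt_of_le hwu with he2 | hlt2
        · rw [← he2, hgw, mul_zero]
          exact mul_nonneg hw.le (hg0 v hv.le)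
        · set l : ℝ := (v - u) / (v - w) with hl
          have hvw : (0:ℝ) < v - w := by linarith
          have hl0 : 0 ≤ l := div_nonneg (by linarith) (by linarith)
          have hl1 : l ≤ 1 := by
            rw [hl, div_le_one hvw]; linarith
          have hlv : l * (v - w) = v - u := by
            rw [hl]; exact div_mul_cancel₀ _ hvw.ne'
          have hcomb : l * w + (1 - l) * v = u := by
            linear_combination -hlv
          have hfu : f u ≤ l * f w + (1 - l) * f v := by
            have := hf.2 (Set.mem_Ici.mpr hw.le) (Set.mem_Ici.mpr hv.le) hl0
              (by linarith : (0:ℝ) ≤ 1 - l) (by ring)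
            simp only [smul_eq_mul] at this
            rwa [hcomb] at this
          have huw' : u - w = (1 - l) * (v - w) := by
            linear_combination hlv
          have hgu : g u ≤ (1 - l) * g v := by
            simp only [hg]
            rw [huw']
            nlinarith [hfu]
          have hvl : v * (1 - l) ≤ u := by
            have hleq : l * (v - w) = v - u := by
              rw [hl]; exact div_mul_cancel₀ _ hvw.ne'
            nlinarith [hleq, mul_nonneg hl0 hw.le, mul_le_mul_of_nonneg_left hl1 hw.le]
          calc v * g u ≤ v * ((1 - l) * g v) := mul_le_mul_of_nonneg_left hgu hv.le
            _ = (v * (1 - l)) * g v := by ring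
            _ ≤ u * g v := mul_le_mul_of_nonneg_right hvl (hg0 v hv.le)
    have hAeq : A = P / u := by
      rw [eq_div_iff hu.ne', hu_def, mul_comm, div_mul_cancel₀ _ hA']
    have hQeq : Q = P / v := by
      rw [eq_div_iff hv.ne', hv_def, mul_comm, div_mul_cancel₀ _ hQ']
    rw [hAeq, hQeq, div_mul_eq_mul_div, div_mul_eq_mul_div,
      div_le_div_iff₀ hu hv]
    linarith [mul_le_mul_of_nonneg_left hkey hP0.le]

/-- Corollary 1: the band fixed-point formula `q* = min(q'', max(c·p, q'))` jointly
minimizes all f-divergences `D_f(P‖Q) = ∫ q·f(p/q) dμ` over the density band. -/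
theorem band_projection_f_divergence {Ω : Type*} [MeasurableSpace Ω]
    (μ : Measure Ω) [SigmaFinite μ]
    (q' q'' : Ω → ℝ)
    (hm' : Measurable q') (hm'' : Measurable q'')
    (hband : ∀ᵐ ω ∂μ, 0 < q' ω ∧ q' ω ≤ q'' ω)
    (hint' : Integrable q' μ)
    (p : Ω → ℝ)
    (hpm : Measurable p) (hpnonneg : ∀ ω, 0 ≤ p ω)
    (hpint : Integrable p μ) (hpone : ∫ ω, p ω ∂μ = 1)
    (c : ℝ) (hc : 0 < c)
    (qstar : Ω → ℝ)
    (hqstar : ∀ ω, qstar ω = min (q'' ω) (max (c * p ω) (q' ω)))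
    (hqstarone : ∫ ω, qstar ω ∂μ = 1)
    (f : ℝ → ℝ) (hf : ConvexOn ℝ (Set.Ici 0) f)
    (q : Ω → ℝ)
    (hqm : Measurable q) (hqnonneg : ∀ ω, 0 ≤ q ω)
    (hqint : Integrable q μ) (hqone : ∫ ω, q ω ∂μ = 1)
    (hqband : ∀ᵐ ω ∂μ, q' ω ≤ q ω ∧ q ω ≤ q'' ω)
    (hintq : Integrable (fun ω => q ω * f (p ω / q ω)) μ)
    (hintqstar : Integrable (fun ω => qstar ω * f (p ω / qstar ω)) μ) :
    ∫ ω, qstar ω * f (p ω / qstar ω) ∂μ ≤ ∫ ω, q ω * f (p ω / q ω) ∂μ := by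
  obtain ⟨k, hk⟩ := exists_subgradient_aux f hf c⁻¹ (by positivity)
  have hqstar_eq : qstar = fun ω => min (q'' ω) (max (c * p ω) (q' ω)) := funext hqstar
  have hqstarm : Measurable qstar := by
    rw [hqstar_eq]; exact hm''.min ((hpm.const_mul c).max hm')
  have hqstar_int : Integrable qstar μ := by
    apply Integrable.mono' ((hpint.const_mul c).add hint') hqstarm.aestronglyMeasurable
    filter_upwards [hband] with ω h
    obtain ⟨h1, h2⟩ := h
    have h0 : 0 ≤ min (q'' ω) (max (c * p ω) (q' ω)) :=
      le_min (by linarith) (le_trans h1.le (le_max_right _ _))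
    calc |qstar ω| = qstar ω := abs_of_nonneg (by rw [hqstar ω]; exact h0)
      _ ≤ max (c * p ω) (q' ω) := by rw [hqstar ω]; exact min_le_right _ _
      _ ≤ c * p ω + q' ω :=
        max_le (by nlinarith [hpnonneg ω]) (by nlinarith [hpnonneg ω])
  have hae : ∀ᵐ ω ∂μ, qstar ω * f (p ω / qstar ω)
      + (f c⁻¹ - k * c⁻¹) * (q ω - qstar ω) ≤ q ω * f (p ω / q ω) := by
    filter_upwards [hband, hqband] with ω hb hqb
    obtain ⟨h1, h2⟩ := hb
    obtain ⟨h3, h4⟩ := hqb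
    have hQ : 0 < q ω := lt_of_lt_of_le h1 h3
    have hA : 0 < qstar ω := by
      rw [hqstar ω]
      exact lt_min (lt_of_lt_of_le h1 h2) (lt_of_lt_of_le h1 (le_max_right _ _))
    apply key_pointwise f hf (by positivity : (0:ℝ) < c⁻¹) hk (hpnonneg ω) hQ hA
    rcases le_total (c * p ω) (q' ω) with hle | hge
    · right; left
      have hAe : qstar ω = q' ω := by
        rw [hqstar ω, max_eq_right hle, min_eq_right h2]
      refine ⟨by rw [hAe]; exact h3, ?_⟩
      rw [hAe]
      calc p ω = (c * p ω) * c⁻¹ := by field_simp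
        _ ≤ q' ω * c⁻¹ := mul_le_mul_of_nonneg_right hle (by positivity)
    · rcases le_total (c * p ω) (q'' ω) with hle2 | hge2
      · left
        have hAe : qstar ω = c * p ω := by
          rw [hqstar ω, max_eq_left hge, min_eq_right hle2]
        rw [hAe, mul_comm c (p ω), mul_assoc, mul_inv_cancel₀ (ne_of_gt hc), mul_one]
      · right; right
        have hAe : qstar ω = q'' ω := by
          rw [hqstar ω, min_eq_left (le_max_of_le_left hge2)]
        refine ⟨by rw [hAe]; exact h4, ?_⟩
        rw [hAe]
        calc q'' ω * c⁻¹ ≤ (c * p ω) * c⁻¹ := mul_le_mul_of_nonneg_right hge2 (by positivity)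
          _ = p ω := by field_simp
  have hsint : Integrable (fun ω => (f c⁻¹ - k * c⁻¹) * (q ω - qstar ω)) μ := by
    have := (hqint.sub hqstar_int).const_mul (f c⁻¹ - k * c⁻¹)
    simpa using this
  have hint_lhs : Integrable (fun ω => qstar ω * f (p ω / qstar ω)
      + (f c⁻¹ - k * c⁻¹) * (q ω - qstar ω)) μ :=
    hintqstar.add hsint
  have hmono := integral_mono_ae hint_lhs hintq hae
  rw [integral_add hintqstar hsint, integral_const_mul,
    integral_sub hqint hqstar_int, hqone, hqstarone] at hmono
  simpa using hmono
end
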